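/- arXiv:0801.3306 — 4 statements merged into one kernel-verified Lean document; each statement's English description precedes it below -/
import Mathlib

section
/- On any digraph with a global sink, the chip addition operators commute: for all non-sink vertices v and w and every chip configuration σ, E_w(E_v σ) = E_v(E_w σ). -/
/-!
Abelian property for chip addition operators (Holroyd et al., Lemma 2.5):
on a digraph with a global sink the chip addition operators commute.
-/

/-- The out-degree of a vertex. -/
def outdeg {V E : Type} [Fintype E] [DecidableEq V] (tail : E → V) (v : V) : ℕ :=
  (Finset.univ.filter (fun e => tail e = v)).card

/-- The number of edges from `v` to `w`. -/
def numEdges {V E : Type} [Fintype E] [DecidableEq V] (tail head : E → V) (v w : V) : ℕ :=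
  (Finset.univ.filter (fun e => tail e = v ∧ head e = w)).card

/-- The vertices other than the (global) sink `s`; on a digraph with global sink these
are exactly the non-sink vertices, and chip configurations are indexed by them. -/
abbrev Vne {V : Type} (s : V) : Type := {v : V // v ≠ s}

/-- Firing the vertex `v`. -/
def fire {V E : Type} [Fintype E] [DecidableEq V] {s : V} (tail head : E → V)
    (σ : Vne s → ℕ) (v : Vne s) : Vne s → ℕ :=
  fun w =>
    if w = v then σ v + numEdges tail head v.1 v.1 - outdeg tail v.1
    else σ w + numEdges tail head v.1 w.1

/-- A (non-sink) vertex is active when it has at least as many chips as outgoing edges. -/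
def Active {V E : Type} [Fintype E] [DecidableEq V] {s : V} (tail : E → V)
    (σ : Vne s → ℕ) (v : Vne s) : Prop :=
  outdeg tail v.1 ≤ σ v

/-- The result of firing the vertices in the list `l` in order, starting from `σ`. -/
def fireList {V E : Type} [Fintype E] [DecidableEq V] {s : V} (tail head : E → V)
    (σ : Vne s → ℕ) : List (Vne s) → (Vne s → ℕ)
  | [] => σ
  | v :: l => fireList tail head (fire tail head σ v) l

/-- The firing sequence `l` is legal from `σ`. -/
def Legal {V E : Type} [Fintype E] [DecidableEq V] {s : V} (tail head : E → V)
    (σ : Vne s → ℕ) : List (Vne s) → Prop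
  | [] => True
  | v :: l => Active tail σ v ∧ Legal tail head (fire tail head σ v) l

/-- A configuration is stable when no non-sink vertex is active. -/
def Stable {V E : Type} [Fintype E] [DecidableEq V] {s : V} (tail : E → V)
    (σ : Vne s → ℕ) : Prop :=
  ∀ v, σ v < outdeg tail v.1

/-- `τ` is the stabilization `σ°` of `σ`: it is stable and obtained from `σ` by a
legal sequence of firings. -/
def StabilizesTo {V E : Type} [Fintype E] [DecidableEq V] {s : V} (tail head : E → V)
    (σ τ : Vne s → ℕ) : Prop :=
  ∃ l, Legal tail head σ l ∧ fireList tail head σ l = τ ∧ Stable tail τ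

/-- Adding a single chip at the vertex `v`. -/
def addChip {V : Type} {s : V} [DecidableEq V] (σ : Vne s → ℕ) (v : Vne s) : Vne s → ℕ :=
  fun w => if w = v then σ w + 1 else σ w

section ChipAux

variable {V E : Type} [Fintype E] [DecidableEq V] {s : V}
variable (tail head : E → V)

lemma fire_ne (σ : Vne s → ℕ) (v w : Vne s) (h : w ≠ v) :
    fire tail head σ v w = σ w + numEdges tail head v.1 w.1 := if_neg h

lemma fire_self (σ : Vne s → ℕ) (v : Vne s) :
    fire tail head σ v v = σ v + numEdges tail head v.1 v.1 - outdeg tail v.1 := if_pos rfl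

lemma active_fire (σ : Vne s → ℕ) (u v : Vne s) (huv : u ≠ v)
    (h : Active tail σ v) : Active tail (fire tail head σ u) v := by
  unfold Active at *
  rw [fire_ne tail head σ u v (Ne.symm huv)]
  exact le_trans h (Nat.le_add_right _ _)

lemma fire_swap (σ : Vne s → ℕ) (u v : Vne s) (huv : u ≠ v)
    (hu : Active tail σ u) (hv : Active tail σ v) :
    fire tail head (fire tail head σ u) v = fire tail head (fire tail head σ v) u := by
  funext x
  unfold Active at hu hv
  simp only [fire]
  split_ifs <;> simp_all <;> omega

lemma legal_append (σ : Vne s → ℕ) (l₁ l₂ : List (Vne s)) :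
    Legal tail head σ (l₁ ++ l₂) ↔
      Legal tail head σ l₁ ∧ Legal tail head (fireList tail head σ l₁) l₂ := by
  induction l₁ generalizing σ with
  | nil => simp [Legal, fireList]
  | cons v l ih => simp [Legal, fireList, ih]; tauto

lemma fireList_append (σ : Vne s → ℕ) (l₁ l₂ : List (Vne s)) :
    fireList tail head σ (l₁ ++ l₂) = fireList tail head (fireList tail head σ l₁) l₂ := by
  induction l₁ generalizing σ with
  | nil => rfl
  | cons v l ih => simp [fireList, ih]

lemma le_fireList (σ : Vne s → ℕ) (l : List (Vne s)) (v : Vne s) (hv : v ∉ l) :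
    σ v ≤ fireList tail head σ l v := by
  induction l generalizing σ with
  | nil => exact le_refl _
  | cons u l ih =>
    simp only [List.mem_cons, not_or] at hv
    refine le_trans ?_ (ih _ hv.2)
    rw [fire_ne _ _ _ _ _ hv.1]
    exact Nat.le_add_right _ _

lemma active_mem (σ : Vne s → ℕ) (l : List (Vne s)) (hl : Legal tail head σ l)
    (hst : Stable tail (fireList tail head σ l)) (v : Vne s) (hv : Active tail σ v) :
    v ∈ l := by
  by_contra h
  exact absurd (hst v) (not_lt.2 (le_trans hv (le_fireList tail head σ l v h)))

lemma exists_split {α : Type*} [DecidableEq α] {a : α} {l : List α} (h : a ∈ l) :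
    ∃ s t, l = s ++ a :: t ∧ a ∉ s := by
  induction l with
  | nil => cases h
  | cons b l ih =>
    by_cases hb : a = b
    · exact ⟨[], l, by simp [hb], by simp⟩
    · obtain ⟨s, t, rfl, hs⟩ := ih (by
        rcases List.mem_cons.1 h with h' | h'
        · exact absurd h' hb
        · exact h')
      exact ⟨b :: s, t, rfl, by simp [hs, Ne.symm, hb]⟩

lemma move_front (σ : Vne s → ℕ) (v : Vne s) (β₁ β₂ : List (Vne s))
    (hv : Active tail σ v) (hmem : v ∉ β₁)
    (hl : Legal tail head σ (β₁ ++ v :: β₂)) :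
    Legal tail head σ (v :: (β₁ ++ β₂)) ∧
      fireList tail head σ (β₁ ++ v :: β₂) = fireList tail head σ (v :: (β₁ ++ β₂)) := by
  induction β₁ generalizing σ with
  | nil => exact ⟨hl, rfl⟩
  | cons u β₁ ih =>
    obtain ⟨hu, hl'⟩ := hl
    simp only [List.mem_cons, not_or] at hmem
    have huv : u ≠ v := Ne.symm hmem.1
    have hv' : Active tail (fire tail head σ u) v := active_fire tail head σ u v huv hv
    obtain ⟨⟨hv2, hl2⟩, heq⟩ := ih (fire tail head σ u) hv' hmem.2 hl'
    have hswap := fire_swap tail head σ u v huv hu hv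
    refine ⟨⟨hv, active_fire tail head σ v u (Ne.symm huv) hu, ?_⟩, ?_⟩
    · rw [← hswap]; exact hl2
    · show fireList tail head (fire tail head σ u) (β₁ ++ v :: β₂)
        = fireList tail head (fire tail head (fire tail head σ v) u) (β₁ ++ β₂)
      rw [heq, ← hswap]
      rfl

lemma count_le (σ : Vne s → ℕ) (α β : List (Vne s)) (hα : Legal tail head σ α)
    (hβ : Legal tail head σ β) (hst : Stable tail (fireList tail head σ β))
    (x : Vne s) : α.count x ≤ β.count x := by
  induction α generalizing σ β with
  | nil => simp
  | cons v α ih =>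
    obtain ⟨hv, hα'⟩ := hα
    have hmem : v ∈ β := active_mem tail head σ β hβ hst v hv
    obtain ⟨β₁, β₂, rfl, hβ₁⟩ := exists_split hmem
    obtain ⟨⟨_, hl⟩, heq⟩ := move_front tail head σ v β₁ β₂ hv hβ₁ hβ
    have hst' : Stable tail (fireList tail head (fire tail head σ v) (β₁ ++ β₂)) := by
      rw [heq] at hst; exact hst
    have h := ih (fire tail head σ v) (β₁ ++ β₂) hα' hl hst'
    simp only [List.count_cons, List.count_append] at *
    by_cases hx : x = v <;> simp [hx] at * <;> omega

/-- Net effect on `w` of firing `u`, as an integer. -/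
def delta (u w : Vne s) : ℤ :=
  (numEdges tail head u.1 w.1 : ℤ) - if w = u then (outdeg tail u.1 : ℤ) else 0

lemma fire_cast (σ : Vne s → ℕ) (v : Vne s) (h : Active tail σ v) (w : Vne s) :
    (fire tail head σ v w : ℤ) = (σ w : ℤ) + delta tail head v w := by
  unfold Active at h
  by_cases hw : w = v
  · subst hw
    rw [fire_self]
    unfold delta
    rw [if_pos rfl]
    have : outdeg tail w.1 ≤ σ w + numEdges tail head w.1 w.1 := le_trans h (Nat.le_add_right _ _)
    push_cast [Nat.cast_sub this]
    ring
  · rw [fire_ne _ _ _ _ _ hw]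
    unfold delta
    rw [if_neg hw]
    push_cast
    ring

lemma fireList_cast [Fintype V] (σ : Vne s → ℕ) (l : List (Vne s))
    (hl : Legal tail head σ l) (w : Vne s) :
    (fireList tail head σ l w : ℤ)
      = (σ w : ℤ) + ∑ u : Vne s, (l.count u : ℤ) * delta tail head u w := by
  induction l generalizing σ with
  | nil => simp [fireList]
  | cons v l ih =>
    obtain ⟨hv, hl'⟩ := hl
    have := ih (fire tail head σ v) hl'
    rw [show fireList tail head σ (v :: l) = fireList tail head (fire tail head σ v) l from rfl,
      this, fire_cast tail head σ v hv w]
    have hsum : ∀ u : Vne s, (((v :: l).count u : ℤ)) * delta tail head u w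
        = (l.count u : ℤ) * delta tail head u w + (if v = u then delta tail head u w else 0) := by
      intro u
      by_cases h : v = u
      · subst h; simp [List.count_cons]; push_cast; ring
      · simp only [List.count_cons, beq_iff_eq, if_neg (Ne.symm h), if_neg h]
        push_cast; ring
    rw [Finset.sum_congr rfl (fun u _ => hsum u), Finset.sum_add_distrib,
      Finset.sum_ite_eq Finset.univ v (fun u => delta tail head u w) ]
    simp
    ring

lemma stabilizesTo_unique [Fintype V] (σ τ τ' : Vne s → ℕ)
    (h : StabilizesTo tail head σ τ) (h' : StabilizesTo tail head σ τ') : τ = τ' := by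
  obtain ⟨α, hα, hαe, hαs⟩ := h
  obtain ⟨β, hβ, hβe, hβs⟩ := h'
  have hc : ∀ x, α.count x = β.count x := fun x =>
    le_antisymm (count_le tail head σ α β hα hβ (hβe ▸ hβs) x)
      (count_le tail head σ β α hβ hα (hαe ▸ hαs) x)
  funext x
  have h1 := fireList_cast tail head σ α hα x
  have h2 := fireList_cast tail head σ β hβ x
  have : (τ x : ℤ) = (τ' x : ℤ) := by
    rw [← hαe, ← hβe, h1, h2]
    congr 1
    exact Finset.sum_congr rfl (fun u _ => by rw [hc u])
  exact_mod_cast this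

lemma legal_addChip (σ : Vne s → ℕ) (l : List (Vne s)) (w : Vne s)
    (hl : Legal tail head σ l) :
    Legal tail head (addChip σ w) l ∧
      fireList tail head (addChip σ w) l = addChip (fireList tail head σ l) w := by
  induction l generalizing σ with
  | nil => exact ⟨trivial, rfl⟩
  | cons u l ih =>
    obtain ⟨hu, hl'⟩ := hl
    have hu' : Active tail (addChip σ w) u := by
      unfold Active addChip at *
      split <;> omega
    have hfe : fire tail head (addChip σ w) u = addChip (fire tail head σ u) w := by
      funext x
      unfold Active at hu
      simp only [fire, addChip]
      split_ifs <;> simp_all <;> omega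
    obtain ⟨h1, h2⟩ := ih (fire tail head σ u) hl'
    refine ⟨⟨hu', ?_⟩, ?_⟩
    · rw [hfe]; exact h1
    · show fireList tail head (fire tail head (addChip σ w) u) l = _
      rw [hfe, h2]
      rfl

lemma addChip_comm (σ : Vne s → ℕ) (v w : Vne s) :
    addChip (addChip σ v) w = addChip (addChip σ w) v := by
  funext x
  unfold addChip
  split_ifs <;> rfl

end ChipAux

/-- **The chip addition operators commute.**  On a digraph with a global sink,
`E_w (E_v σ) = E_v (E_w σ)` for all non-sink vertices `v, w` and every chip
configuration `σ`; here `E_v σ = (σ + 1_v)°`, expressed below via the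
stabilization relation. -/
theorem chip_addition_operators_commute
    {V E : Type} [Fintype V] [DecidableEq V] [Fintype E]
    (tail head : E → V)
    (s : V) (hs : outdeg tail s = 0)
    (hglobal : ∀ v : V,
      Relation.ReflTransGen (fun a b => ∃ e, tail e = a ∧ head e = b) v s)
    (v w : Vne s) (σ σ₁ σ₂ τ₁ τ₂ : Vne s → ℕ)
    (h1 : StabilizesTo tail head (addChip σ v) σ₁)
    (h2 : StabilizesTo tail head (addChip σ₁ w) τ₁)
    (h3 : StabilizesTo tail head (addChip σ w) σ₂)
    (h4 : StabilizesTo tail head (addChip σ₂ v) τ₂) :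
    τ₁ = τ₂ := by
  obtain ⟨l1, hl1, he1, hs1⟩ := h1
  obtain ⟨l2, hl2, he2, hs2⟩ := h2
  obtain ⟨l3, hl3, he3, hs3⟩ := h3
  obtain ⟨l4, hl4, he4, hs4⟩ := h4
  have A : StabilizesTo tail head (addChip (addChip σ v) w) τ₁ := by
    obtain ⟨hL, hE⟩ := legal_addChip tail head (addChip σ v) l1 w hl1
    refine ⟨l1 ++ l2, ?_, ?_, hs2⟩
    · rw [legal_append]
      exact ⟨hL, by rw [hE, he1]; exact hl2⟩
    · rw [fireList_append, hE, he1, he2]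
  have B : StabilizesTo tail head (addChip (addChip σ v) w) τ₂ := by
    rw [addChip_comm]
    obtain ⟨hL, hE⟩ := legal_addChip tail head (addChip σ w) l3 v hl3
    refine ⟨l3 ++ l4, ?_, ?_, hs4⟩
    · rw [legal_append]
      exact ⟨hL, by rw [hE, he3]; exact hl4⟩
    · rw [fireList_append, hE, he3, he4]
  exact stabilizesTo_unique tail head _ τ₁ τ₂ A B
end

section
/- Let G be a digraph on n vertices with a global sink. Every equivalence class of ℤ^{n−1} modulo the integer row span of the reduced Laplacian Δ'(G) contains exactly one recurrent chip configuration of G. -/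
/-- `σ` is accessible: from any chip configuration `ζ` one can obtain `σ` by adding
some chips and then performing a legal sequence of firings of active vertices. -/
def Accessible {V E : Type} [Fintype E] [DecidableEq V] {s : V} (tail head : E → V)
    (σ : Vne s → ℕ) : Prop :=
  ∀ ζ : Vne s → ℕ, ∃ (β : Vne s → ℕ) (l : List (Vne s)),
    Legal tail head (fun v => ζ v + β v) l ∧ fireList tail head (fun v => ζ v + β v) l = σ

/-- A chip configuration is recurrent when it is both stable and accessible. -/
def Recurrent {V E : Type} [Fintype E] [DecidableEq V] {s : V} (tail head : E → V)
    (σ : Vne s → ℕ) : Prop :=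
  Stable tail σ ∧ Accessible tail head σ

/-- The reduced Laplacian of the digraph. -/
def reducedLaplacian {V E : Type} [Fintype E] [DecidableEq V] (tail head : E → V)
    (s : V) : Matrix (Vne s) (Vne s) ℤ :=
  fun i j => (if i = j then (outdeg tail i.1 : ℤ) else 0) - (numEdges tail head i.1 j.1 : ℤ)

/-- The integer row span of the reduced Laplacian. -/
def rowSpan {V E : Type} [Fintype E] [DecidableEq V] (tail head : E → V) (s : V) :
    Submodule ℤ (Vne s → ℤ) :=
  Submodule.span ℤ (Set.range (fun i => reducedLaplacian tail head s i))

set_option linter.unusedSectionVars false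
set_option linter.unusedVariables false
set_option linter.unusedTactic false
set_option linter.unnecessarySeqFocus false

namespace Chip


open Finset

variable {V E : Type} [Fintype V] [DecidableEq V] [Fintype E]
variable (tail head : E → V) (s : V)

/-- one row of the reduced Laplacian -/
def row (v : Vne s) : Vne s → ℤ := reducedLaplacian tail head s v

lemma row_apply (v u : Vne s) :
    row tail head s v u =
      (if v = u then (outdeg tail v.1 : ℤ) else 0) - (numEdges tail head v.1 u.1 : ℤ) := rfl

/-- integer combination of rows -/
def combo (c : Vne s → ℤ) : Vne s → ℤ := fun u => ∑ v, c v * row tail head s v u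

lemma combo_mem_rowSpan (c : Vne s → ℤ) :
    combo tail head s c ∈
      Submodule.span ℤ (Set.range (fun i => reducedLaplacian tail head s i)) := by
  have : combo tail head s c = ∑ v, c v • (reducedLaplacian tail head s v) := by
    funext u
    simp [combo, row]
  rw [this]
  exact Submodule.sum_mem _ fun v _ =>
    Submodule.smul_mem _ _ (Submodule.subset_span (Set.mem_range_self v))

lemma combo_split (c : Vne s → ℤ) (u : Vne s) :
    combo tail head s c u =
      c u * ((outdeg tail u.1 : ℤ) - (numEdges tail head u.1 u.1 : ℤ)) +
        ∑ v ∈ univ.erase u, c v * (-(numEdges tail head v.1 u.1 : ℤ)) := by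
  rw [combo, ← Finset.add_sum_erase _ _ (mem_univ u)]
  congr 1
  · simp [row_apply]
  · exact Finset.sum_congr rfl fun v hv => by
      simp [row_apply, (Finset.mem_erase.mp hv).1]

lemma combo_le_of_nonneg {c : Vne s → ℤ} (hc : ∀ v, 0 ≤ c v) (u : Vne s) :
    combo tail head s c u ≤ c u * (outdeg tail u.1 : ℤ) := by
  rw [combo_split]
  have h1 : c u * ((outdeg tail u.1 : ℤ) - (numEdges tail head u.1 u.1 : ℤ))
      ≤ c u * (outdeg tail u.1 : ℤ) := by
    apply mul_le_mul_of_nonneg_left _ (hc u)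
    simp [sub_le_self_iff]
  have h2 : ∑ v ∈ univ.erase u, c v * (-(numEdges tail head v.1 u.1 : ℤ)) ≤ 0 :=
    Finset.sum_nonpos fun v _ => mul_nonpos_of_nonneg_of_nonpos (hc v) (by simp)
  linarith

lemma combo_nonneg_at_zero {c : Vne s → ℤ} (hc : ∀ v, 0 ≤ c v) (u : Vne s)
    (hu : c u = 0) : combo tail head s c u ≤ 0 := by
  have := combo_le_of_nonneg tail head s hc u
  rw [hu] at this; simpa using this

lemma combo_add (c d : Vne s → ℤ) :
    combo tail head s (c + d) = combo tail head s c + combo tail head s d := by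
  funext u
  simp [combo, add_mul, Finset.sum_add_distrib]

lemma combo_sub (c d : Vne s → ℤ) :
    combo tail head s (c - d) = combo tail head s c - combo tail head s d := by
  funext u
  simp [combo, sub_mul, Finset.sum_sub_distrib]

/-- out-degree equals sum over all heads of edge multiplicities -/
lemma outdeg_eq_sum (v : V) : outdeg tail v = ∑ w : V, numEdges tail head v w := by
  rw [outdeg]
  rw [Finset.card_eq_sum_card_fiberwise (f := head) (t := univ) (fun e _ => mem_univ _)]
  apply Finset.sum_congr rfl
  intro w _
  rw [numEdges, Finset.filter_filter]

lemma sum_row (v : Vne s) :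
    ∑ u : Vne s, row tail head s v u = (numEdges tail head v.1 s : ℤ) := by
  have h1 : ∑ u : Vne s, ((numEdges tail head v.1 u.1 : ℤ)) =
      ∑ w ∈ univ.erase s, (numEdges tail head v.1 w : ℤ) := by
    rw [← Finset.filter_ne' univ s]
    exact (Finset.sum_subtype (p := fun w => w ≠ s) (univ.filter (· ≠ s)) (by simp)
      (fun w => (numEdges tail head v.1 w : ℤ))).symm
  have h2 : ∑ w ∈ univ.erase s, (numEdges tail head v.1 w : ℤ) =
      (∑ w : V, (numEdges tail head v.1 w : ℤ)) - numEdges tail head v.1 s := by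
    rw [← Finset.add_sum_erase _ _ (mem_univ s)]
    ring
  have h3 : ∑ u : Vne s, (if v = u then (outdeg tail v.1 : ℤ) else 0) = (outdeg tail v.1 : ℤ) := by
    simp
  have h4 : (outdeg tail v.1 : ℤ) = ∑ w : V, (numEdges tail head v.1 w : ℤ) := by
    rw [outdeg_eq_sum tail head]; push_cast; rfl
  calc ∑ u : Vne s, row tail head s v u
      = (∑ u : Vne s, (if v = u then (outdeg tail v.1 : ℤ) else 0)) -
        ∑ u : Vne s, ((numEdges tail head v.1 u.1 : ℤ)) := by
        rw [← Finset.sum_sub_distrib]; rfl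
    _ = (numEdges tail head v.1 s : ℤ) := by rw [h1, h2, h3, h4]; ring

lemma sum_combo (c : Vne s → ℤ) :
    ∑ u : Vne s, combo tail head s c u = ∑ v : Vne s, c v * (numEdges tail head v.1 s : ℤ) := by
  simp only [combo]
  rw [Finset.sum_comm]
  apply Finset.sum_congr rfl
  intro v _
  rw [← Finset.mul_sum, sum_row]


/-- firing on integer configurations -/
def zfire (ν : Vne s → ℤ) (v : Vne s) : Vne s → ℤ := ν - row tail head s v

def zfireList (ν : Vne s → ℤ) : List (Vne s) → (Vne s → ℤ)
  | [] => ν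
  | v :: l => zfireList (zfire tail head s ν v) l

/-- legality with respect to a threshold `t` -/
def ZLegal (t : Vne s → ℤ) : (Vne s → ℤ) → List (Vne s) → Prop
  | _, [] => True
  | ν, v :: l => t v ≤ ν v ∧ ZLegal t (zfire tail head s ν v) l

lemma zfire_apply_self (ν : Vne s → ℤ) (v : Vne s) :
    zfire tail head s ν v v = ν v - (outdeg tail v.1 : ℤ) + (numEdges tail head v.1 v.1 : ℤ) := by
  simp [zfire, row_apply]; ring

lemma zfire_apply_ne (ν : Vne s → ℤ) (v w : Vne s) (h : v ≠ w) :
    zfire tail head s ν v w = ν w + (numEdges tail head v.1 w.1 : ℤ) := by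
  simp [zfire, row_apply, h]

lemma count_cons_int {v w : Vne s} {l : List (Vne s)} :
    (((v :: l).count w : ℤ)) = (l.count w : ℤ) + if v = w then 1 else 0 := by
  rw [List.count_cons]
  by_cases h : v = w <;> simp [h] <;> exact fun hh => h (Subtype.ext hh)

lemma zfireList_eq (ν : Vne s → ℤ) (l : List (Vne s)) :
    zfireList tail head s ν l = ν - combo tail head s (fun v => (l.count v : ℤ)) := by
  induction l generalizing ν with
  | nil => funext u; simp [zfireList, combo]
  | cons v l ih =>
      rw [zfireList, ih]
      funext u
      have hthis : combo tail head s (fun w => ((v :: l).count w : ℤ)) u =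
          combo tail head s (fun w => (l.count w : ℤ)) u + row tail head s v u := by
        simp only [combo]
        calc ∑ x : Vne s, ((v :: l).count x : ℤ) * row tail head s x u
            = ∑ x : Vne s, ((l.count x : ℤ) * row tail head s x u +
                (if v = x then row tail head s x u else 0)) := by
              refine Finset.sum_congr rfl fun x _ => ?_
              rw [count_cons_int, add_mul, ite_mul, one_mul, zero_mul]
          _ = (∑ x : Vne s, (l.count x : ℤ) * row tail head s x u) +
                ∑ x : Vne s, (if v = x then row tail head s x u else 0) := by
              rw [Finset.sum_add_distrib]
          _ = (∑ x : Vne s, (l.count x : ℤ) * row tail head s x u) + row tail head s v u := by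
              rw [Finset.sum_ite_eq]; simp
      simp only [Pi.sub_apply, zfire]
      rw [hthis]
      ring

lemma zfireList_append (ν : Vne s → ℤ) (l₁ l₂ : List (Vne s)) :
    zfireList tail head s ν (l₁ ++ l₂) = zfireList tail head s (zfireList tail head s ν l₁) l₂ := by
  induction l₁ generalizing ν with
  | nil => rfl
  | cons v l ih => rw [List.cons_append, zfireList, zfireList, ih]

lemma ZLegal_append {t : Vne s → ℤ} (ν : Vne s → ℤ) {l₁ l₂ : List (Vne s)}
    (h₁ : ZLegal tail head s t ν l₁) (h₂ : ZLegal tail head s t (zfireList tail head s ν l₁) l₂) :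
    ZLegal tail head s t ν (l₁ ++ l₂) := by
  induction l₁ generalizing ν with
  | nil => exact h₂
  | cons v l ih => exact ⟨h₁.1, ih _ h₁.2 h₂⟩

lemma ZLegal_mono {t : Vne s → ℤ} {ν ν' : Vne s → ℤ} (h : ∀ u, ν u ≤ ν' u)
    {l : List (Vne s)} (hl : ZLegal tail head s t ν l) : ZLegal tail head s t ν' l := by
  induction l generalizing ν ν' with
  | nil => trivial
  | cons v l ih =>
      refine ⟨le_trans hl.1 (h v), ih (fun u => ?_) hl.2⟩
      simp only [zfire, Pi.sub_apply]
      exact sub_le_sub_right (h u) _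

/-- chip-firing threshold: the out-degrees -/
def td : Vne s → ℤ := fun v => (outdeg tail v.1 : ℤ)

/-- Least action principle: if removing `c` from `ν` (as Laplacian rows) is stable, then any
legal sequence from `ν` fires each vertex at most `c` times. -/
lemma least_action (ν : Vne s → ℤ) (c : Vne s → ℕ)
    (hstab : ∀ u, ν u - combo tail head s (fun v => (c v : ℤ)) u < td tail s u)
    {l : List (Vne s)} (hl : ZLegal tail head s (td tail s) ν l) :
    ∀ u, l.count u ≤ c u := by
  induction l generalizing ν c with
  | nil => intro u; simp
  | cons v l ih =>
      obtain ⟨hv, hl'⟩ := hl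
      have hcv : 1 ≤ c v := by
        by_contra h
        have hc0 : c v = 0 := by omega
        have := combo_nonneg_at_zero tail head s
          (c := fun w => (c w : ℤ)) (fun w => by positivity) v (by simp [hc0])
        have := hstab v
        omega
      -- new coefficients
      set c' : Vne s → ℕ := fun w => if w = v then c v - 1 else c w with hc'
      have hcomb : combo tail head s (fun w => (c' w : ℤ)) =
          combo tail head s (fun w => (c w : ℤ)) - row tail head s v := by
        have : (fun w => (c' w : ℤ)) = (fun w => (c w : ℤ)) -
            (fun w => if w = v then (1:ℤ) else 0) := by
          funext w
          by_cases hw : w = v <;> simp [hc', hw] <;> omega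
        rw [this, combo_sub]
        congr 1
        funext u
        simp only [combo]
        rw [Finset.sum_congr rfl (fun w _ => by rw [ite_mul, zero_mul, one_mul])]
        simp [eq_comm]
      have hstab' : ∀ u, zfire tail head s ν v u -
          combo tail head s (fun w => (c' w : ℤ)) u < td tail s u := by
        intro u
        rw [hcomb]
        have := hstab u
        simp only [zfire, Pi.sub_apply]
        omega
      have hle := ih _ _ hstab' hl'
      intro u
      have hthis := hle u
      rw [List.count_cons]
      simp only [hc'] at hthis
      by_cases hu : u = v
      · subst hu
        rw [if_pos rfl] at hthis
        simp only [beq_self_eq_true, if_true]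
        omega
      · rw [if_neg hu] at hthis
        simp only [beq_iff_eq]
        rw [if_neg (fun h : v = u => hu h.symm)]
        omega


/-! ### Reachability and termination -/

def Reach : ℕ → V → Prop
  | 0, v => v = s
  | (k+1), v => v = s ∨ ∃ e, tail e = v ∧ Reach k (head e)

lemma reach_exists
    (hg : ∀ v : V, Relation.ReflTransGen (fun a b => ∃ e, tail e = a ∧ head e = b) v s)
    (v : V) : ∃ k, Reach tail head s k v := by
  refine Relation.ReflTransGen.head_induction_on (hg v) ⟨0, rfl⟩ ?_
  intro a c hac _ ih
  obtain ⟨k, hk⟩ := ih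
  obtain ⟨e, he1, he2⟩ := hac
  exact ⟨k + 1, Or.inr ⟨e, he1, he2 ▸ hk⟩⟩

open Classical in
noncomputable def dist (hg : ∀ v : V, ∃ k, Reach tail head s k v) (v : V) : ℕ :=
  Nat.find (hg v)

open Classical in
lemma dist_step (hg : ∀ v : V, ∃ k, Reach tail head s k v) (u : Vne s) :
    ∃ e, tail e = u.1 ∧ (head e = s ∨
      ∃ w : Vne s, head e = w.1 ∧ dist tail head s hg w.1 < dist tail head s hg u.1) := by
  have hspec : Reach tail head s (dist tail head s hg u.1) u.1 := Nat.find_spec (hg u.1)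
  have hne : (dist tail head s hg u.1) ≠ 0 := by
    intro h0
    rw [h0] at hspec
    exact u.2 hspec
  obtain ⟨k, hk⟩ := Nat.exists_eq_succ_of_ne_zero hne
  rw [hk] at hspec
  rcases hspec with h | ⟨e, he1, he2⟩
  · exact absurd h u.2
  · refine ⟨e, he1, ?_⟩
    by_cases hs : head e = s
    · exact Or.inl hs
    · refine Or.inr ⟨⟨head e, hs⟩, rfl, ?_⟩
      show dist tail head s hg (head e) < dist tail head s hg u.1
      have : dist tail head s hg (head e) ≤ k := Nat.find_min' (hg (head e)) he2
      omega

open Classical in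
lemma dist_spec (hg : ∀ v : V, ∃ k, Reach tail head s k v) (v : V) :
    Reach tail head s (dist tail head s hg v) v := Nat.find_spec (hg v)

lemma numEdges_pos_of_edge {e : E} {v w : V} (h1 : tail e = v) (h2 : head e = w) :
    1 ≤ numEdges tail head v w := by
  rw [numEdges]
  exact Finset.card_pos.mpr ⟨e, by simp [h1, h2]⟩

lemma numEdges_lt_outdeg {v : V} {e : E} (h1 : tail e = v) (h2 : head e ≠ v) :
    numEdges tail head v v < outdeg tail v := by
  rw [numEdges, outdeg]
  apply Finset.card_lt_card
  constructor
  · intro e' he'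
    simp only [Finset.mem_filter] at he' ⊢
    exact ⟨he'.1, he'.2.1⟩
  · intro hsub
    have : e ∈ univ.filter (fun e => tail e = v) := by simp [h1]
    have := hsub this
    simp only [Finset.mem_filter] at this
    exact h2 this.2.2

lemma outdeg_le_cardE (v : V) : (outdeg tail v : ℤ) ≤ (Fintype.card E : ℤ) := by
  have : outdeg tail v ≤ Fintype.card E := Finset.card_filter_le _ _
  exact_mod_cast this

/-- entrywise lower bound preserved along a legal sequence -/
lemma zfireList_lower {t : Vne s → ℤ} {ν : Vne s → ℤ} {l : List (Vne s)}
    (hl : ZLegal tail head s t ν l) (w : Vne s) :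
    min (ν w) (t w - (outdeg tail w.1 : ℤ) + (numEdges tail head w.1 w.1 : ℤ)) ≤
      zfireList tail head s ν l w := by
  induction l generalizing ν with
  | nil => exact min_le_left _ _
  | cons v l ih =>
      obtain ⟨hv, hl'⟩ := hl
      refine le_trans ?_ (ih hl')
      by_cases hw : v = w
      · subst hw
        rw [zfire_apply_self]
        simp only [le_min_iff, min_le_iff]
        omega
      · rw [zfire_apply_ne tail head s ν v w hw]
        have h2 : (0:ℤ) ≤ (numEdges tail head v.1 w.1 : ℤ) := by positivity
        simp only [le_min_iff, min_le_iff]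
        omega

/-- the per-vertex count bound along a legal firing sequence, by induction on distance -/
lemma count_bound (hg : ∀ v : V, ∃ k, Reach tail head s k v)
    {t : Vne s → ℤ} (ht : ∀ v, 1 ≤ t v) {ν : Vne s → ℤ} {l : List (Vne s)}
    (hl : ZLegal tail head s t ν l) :
    ∀ n : ℕ, ∀ u : Vne s, dist tail head s hg u.1 ≤ n →
      (l.count u : ℤ) ≤
        Nat.rec (motive := fun _ => ℤ)
          (∑ w : Vne s, (ν w - min (ν w) (1 - (outdeg tail w.1 : ℤ))))
          (fun _ acc => (∑ w : Vne s, (ν w - min (ν w) (1 - (outdeg tail w.1 : ℤ)))) +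
            ((Fintype.card E : ℤ) + 1) * acc) n := by
  set L : Vne s → ℤ := fun w => min (ν w) (1 - (outdeg tail w.1 : ℤ)) with hL
  set T : ℤ := ∑ w : Vne s, (ν w - L w) with hT
  set DZ : ℤ := (Fintype.card E : ℤ) + 1 with hDZ
  set C : ℕ → ℤ := fun n => Nat.rec (motive := fun _ => ℤ) T (fun _ acc => T + DZ * acc) n with hC
  have hLle : ∀ w, L w ≤ ν w ∧ L w ≤ 1 - (outdeg tail w.1 : ℤ) :=
    fun w => ⟨min_le_left _ _, min_le_right _ _⟩
  have hT0 : 0 ≤ T := Finset.sum_nonneg fun w _ => by have := (hLle w).1; omega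
  have hDZ1 : 1 ≤ DZ := by rw [hDZ]; omega
  have hC0 : ∀ n, 0 ≤ C n := by
    intro n
    induction n with
    | zero => exact hT0
    | succ n ih => have : 0 ≤ DZ * C n := mul_nonneg (by omega) ih
                   show 0 ≤ T + DZ * C n
                   omega
  have hCT : ∀ n, T ≤ C n := by
    intro n
    cases n with
    | zero => exact le_refl _
    | succ n => have h1 := hC0 n
                have : 0 ≤ DZ * C n := mul_nonneg (by omega) h1
                show T ≤ T + DZ * C n
                omega
  have hCmono : ∀ {m n}, m ≤ n → C m ≤ C n := by
    intro m n hmn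
    induction n with
    | zero => interval_cases m; exact le_refl _
    | succ n ih =>
        rcases Nat.lt_or_ge m (n+1) with h | h
        · refine le_trans (ih (by omega)) ?_
          show C n ≤ T + DZ * C n
          nlinarith [hC0 n, hT0]
        · have : m = n + 1 := by omega
          subst this; exact le_refl _
  -- final configuration facts
  set fin : Vne s → ℤ := zfireList tail head s ν l with hfin
  have hfinL : ∀ w, L w ≤ fin w := by
    intro w
    refine le_trans ?_ (zfireList_lower tail head s hl w)
    have h1 := ht w
    have h2 : (0:ℤ) ≤ (numEdges tail head w.1 w.1 : ℤ) := by positivity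
    simp only [hL, le_min_iff, min_le_iff]
    omega
  have hfin_eq : ∀ w, fin w = ν w - combo tail head s (fun v => (l.count v : ℤ)) w := by
    intro w; rw [hfin, zfireList_eq]; rfl
  have hsumfin : ∑ w : Vne s, fin w =
      (∑ w : Vne s, ν w) - ∑ v : Vne s, (l.count v : ℤ) * (numEdges tail head v.1 s : ℤ) := by
    rw [Finset.sum_congr rfl (fun w _ => hfin_eq w), Finset.sum_sub_distrib, sum_combo]
  have hcount0 : ∀ v : Vne s, (0:ℤ) ≤ (l.count v : ℤ) := fun v => by positivity
  -- main induction
  intro n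
  induction n with
  | zero =>
      intro u hu
      exfalso
      have hspec : Reach tail head s (dist tail head s hg u.1) u.1 := dist_spec tail head s hg u.1
      have : dist tail head s hg u.1 = 0 := by omega
      rw [this] at hspec
      exact u.2 hspec
  | succ n ih =>
      intro u hu
      obtain ⟨e, he1, hcase⟩ := dist_step tail head s hg u
      rcases hcase with hs | ⟨w, hw, hdw⟩
      · -- edge straight to the sink
        have ha : (1:ℤ) ≤ (numEdges tail head u.1 s : ℤ) := by
          exact_mod_cast numEdges_pos_of_edge tail head he1 hs
        have h1 : (l.count u : ℤ) ≤ (l.count u : ℤ) * (numEdges tail head u.1 s : ℤ) :=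
          le_mul_of_one_le_right (hcount0 u) ha
        have h2 : (l.count u : ℤ) * (numEdges tail head u.1 s : ℤ) ≤
            ∑ v : Vne s, (l.count v : ℤ) * (numEdges tail head v.1 s : ℤ) := by
          apply Finset.single_le_sum (f := fun v : Vne s =>
            (l.count v : ℤ) * (numEdges tail head v.1 s : ℤ)) _ (mem_univ u)
          intro v _
          exact mul_nonneg (hcount0 v) (by positivity)
        have h3 : ∑ v : Vne s, (l.count v : ℤ) * (numEdges tail head v.1 s : ℤ) ≤ T := by
          have h4 : ∑ w : Vne s, L w ≤ ∑ w : Vne s, fin w :=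
            Finset.sum_le_sum (fun w _ => hfinL w)
          have h5 : T = (∑ w : Vne s, ν w) - ∑ w : Vne s, L w := by
            rw [hT, Finset.sum_sub_distrib]
          omega
        have h17 : 0 ≤ DZ * C n := mul_nonneg (by omega) (hC0 n)
        show (l.count u : ℤ) ≤ T + DZ * C n
        omega
      · -- edge to a closer non-sink vertex w
        have hn : dist tail head s hg w.1 ≤ n := by omega
        have hcw := ih w hn
        have huw : u ≠ w := by
          intro h; rw [h] at hdw; omega
        have ha : (1:ℤ) ≤ (numEdges tail head u.1 w.1 : ℤ) := by
          exact_mod_cast numEdges_pos_of_edge tail head he1 hw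
        -- bound on the sum of in-firings at w
        have hsplit := combo_split tail head s (fun v => (l.count v : ℤ)) w
        have hfinw : fin w = ν w - combo tail head s (fun v => (l.count v : ℤ)) w := hfin_eq w
        have hfinw_up : fin w ≤ T + L w := by
          have h4 : ∑ w' ∈ univ.erase w, L w' ≤ ∑ w' ∈ univ.erase w, fin w' :=
            Finset.sum_le_sum (fun w' _ => hfinL w')
          have h5 : ∑ w' ∈ univ.erase w, fin w' = (∑ w' : Vne s, fin w') - fin w := by
            rw [← Finset.add_sum_erase _ _ (mem_univ w)]; ring
          have h6 : ∑ w' ∈ univ.erase w, L w' = (∑ w' : Vne s, L w') - L w := by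
            rw [← Finset.add_sum_erase _ _ (mem_univ w)]; ring
          have h7 : ∑ w' : Vne s, fin w' ≤ ∑ w' : Vne s, ν w' := by
            have : 0 ≤ ∑ v : Vne s, (l.count v : ℤ) * (numEdges tail head v.1 s : ℤ) :=
              Finset.sum_nonneg fun v _ => by positivity
            omega
          have h8 : T = (∑ w' : Vne s, ν w') - ∑ w' : Vne s, L w' := by
            rw [hT, Finset.sum_sub_distrib]
          omega
        have hsum_in : ∑ v ∈ univ.erase w, (l.count v : ℤ) * (numEdges tail head v.1 w.1 : ℤ) ≤
            (l.count w : ℤ) * (outdeg tail w.1 : ℤ) + T := by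
          have h9 : ∑ v ∈ univ.erase w, (l.count v : ℤ) * (-(numEdges tail head v.1 w.1 : ℤ)) =
              -(∑ v ∈ univ.erase w, (l.count v : ℤ) * (numEdges tail head v.1 w.1 : ℤ)) := by
            rw [← Finset.sum_neg_distrib]
            exact Finset.sum_congr rfl fun v _ => by ring
          have h10 : (0:ℤ) ≤ (numEdges tail head w.1 w.1 : ℤ) := by positivity
          have h11 : (l.count w : ℤ) * ((outdeg tail w.1 : ℤ) - (numEdges tail head w.1 w.1 : ℤ))
              ≤ (l.count w : ℤ) * (outdeg tail w.1 : ℤ) :=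
            mul_le_mul_of_nonneg_left (by omega) (hcount0 w)
          have h12 : L w ≤ ν w := (hLle w).1
          -- fin w = ν w - combo = ν w - (count_w * (d - a) + Σ_erase count * (-a))
          rw [hsplit] at hfinw
          omega
        have hterm : (l.count u : ℤ) * (numEdges tail head u.1 w.1 : ℤ) ≤
            ∑ v ∈ univ.erase w, (l.count v : ℤ) * (numEdges tail head v.1 w.1 : ℤ) := by
          apply Finset.single_le_sum (f := fun v : Vne s =>
            (l.count v : ℤ) * (numEdges tail head v.1 w.1 : ℤ))
          · intro v _
            exact mul_nonneg (hcount0 v) (by positivity)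
          · exact Finset.mem_erase.mpr ⟨huw, mem_univ u⟩
        have hcu : (l.count u : ℤ) ≤ (l.count u : ℤ) * (numEdges tail head u.1 w.1 : ℤ) :=
          le_mul_of_one_le_right (hcount0 u) ha
        have hdeg : (l.count w : ℤ) * (outdeg tail w.1 : ℤ) ≤ DZ * C n := by
          have h13 := outdeg_le_cardE (E := E) tail (v := w.1)
          have h14 : (0:ℤ) ≤ (outdeg tail w.1 : ℤ) := by positivity
          have h15 : (l.count w : ℤ) * (outdeg tail w.1 : ℤ) ≤ C n * (Fintype.card E : ℤ) :=
            mul_le_mul hcw h13 h14 (hC0 n)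
          have h16 : C n * (Fintype.card E : ℤ) ≤ DZ * C n := by
            rw [hDZ]; nlinarith [hC0 n]
          omega
        show (l.count u : ℤ) ≤ T + DZ * C n
        omega


lemma length_eq_sum_count (l : List (Vne s)) : l.length = ∑ u : Vne s, l.count u := by
  induction l with
  | nil => simp
  | cons v l ih =>
      rw [List.length_cons, ih]
      have : ∀ u : Vne s, (v :: l).count u = l.count u + if v = u then 1 else 0 := by
        intro u
        rw [List.count_cons]
        by_cases h : v = u <;> simp [h] <;> exact fun hh => h (Subtype.ext hh)
      rw [Finset.sum_congr rfl fun u _ => this u, Finset.sum_add_distrib]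
      simp

/-- iterated bound function used in `count_bound` -/
noncomputable def Cbound (ν : Vne s → ℤ) : ℕ → ℤ := fun n =>
  Nat.rec (motive := fun _ => ℤ)
    (∑ w : Vne s, (ν w - min (ν w) (1 - (outdeg tail w.1 : ℤ))))
    (fun _ acc => (∑ w : Vne s, (ν w - min (ν w) (1 - (outdeg tail w.1 : ℤ)))) +
      ((Fintype.card E : ℤ) + 1) * acc) n

lemma legal_length_bound (hg : ∀ v : V, ∃ k, Reach tail head s k v)
    {t : Vne s → ℤ} (ht : ∀ v, 1 ≤ t v) {ν : Vne s → ℤ} {l : List (Vne s)}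
    (hl : ZLegal tail head s t ν l) :
    (l.length : ℤ) ≤ ∑ u : Vne s, Cbound tail s ν (dist tail head s hg u.1) := by
  rw [length_eq_sum_count]
  push_cast
  apply Finset.sum_le_sum
  intro u _
  exact count_bound tail head s hg ht hl (dist tail head s hg u.1) u (le_refl _)

lemma exists_stab_of_bound {t : Vne s → ℤ} :
    ∀ (n : ℕ) (ν : Vne s → ℤ), (∀ l, ZLegal tail head s t ν l → l.length ≤ n) →
      ∃ l, ZLegal tail head s t ν l ∧ ∀ v, zfireList tail head s ν l v < t v := by
  intro n
  induction n with
  | zero =>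
      intro ν hb
      refine ⟨[], trivial, fun v => ?_⟩
      by_contra h
      push_neg at h
      have := hb [v] ⟨h, trivial⟩
      simp at this
  | succ n ih =>
      intro ν hb
      by_cases h : ∃ v, t v ≤ ν v
      · obtain ⟨v, hv⟩ := h
        have hb' : ∀ l, ZLegal tail head s t (zfire tail head s ν v) l → l.length ≤ n := by
          intro l hl
          have := hb (v :: l) ⟨hv, hl⟩
          simpa using this
        obtain ⟨l, hl, hstab⟩ := ih _ hb'
        exact ⟨v :: l, ⟨hv, hl⟩, hstab⟩
      · push_neg at h
        exact ⟨[], trivial, h⟩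

lemma exists_stab (hg : ∀ v : V, ∃ k, Reach tail head s k v)
    {t : Vne s → ℤ} (ht : ∀ v, 1 ≤ t v) (ν : Vne s → ℤ) :
    ∃ l, ZLegal tail head s t ν l ∧ ∀ v, zfireList tail head s ν l v < t v := by
  apply exists_stab_of_bound tail head s
    ((∑ u : Vne s, Cbound tail s ν (dist tail head s hg u.1)).toNat)
  intro l hl
  have := legal_length_bound tail head s hg ht hl
  omega

/-- every integer vector can be raised to a nonnegative one by adding Laplacian rows with
nonnegative coefficients -/
lemma pos_rep (hg : ∀ v : V, ∃ k, Reach tail head s k v) (y : Vne s → ℤ) :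
    ∃ c : Vne s → ℕ, ∀ u, 0 ≤ y u + combo tail head s (fun v => (c v : ℤ)) u := by
  obtain ⟨l, hl, hst⟩ := exists_stab tail head s hg
    (t := fun _ => 1) (fun _ => le_refl 1) (fun u => -(y u))
  refine ⟨fun v => l.count v, fun u => ?_⟩
  have h1 := hst u
  rw [zfireList_eq] at h1
  simp only [Pi.sub_apply] at h1
  show 0 ≤ y u + combo tail head s (fun v => (l.count v : ℤ)) u
  omega


/-! ### Bridging the natural-number and integer dynamics -/

def toZ (σ : Vne s → ℕ) : Vne s → ℤ := fun v => (σ v : ℤ)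

lemma toZ_inj {σ τ : Vne s → ℕ} (h : toZ s σ = toZ s τ) : σ = τ := by
  funext v
  have := congrFun h v
  simpa [toZ] using this

lemma active_iff (σ : Vne s → ℕ) (v : Vne s) :
    Active tail σ v ↔ td tail s v ≤ toZ s σ v := by
  rw [Active, td, toZ]
  exact_mod_cast Iff.rfl

lemma toZ_fire {σ : Vne s → ℕ} {v : Vne s} (h : Active tail σ v) :
    toZ s (fire tail head σ v) = zfire tail head s (toZ s σ) v := by
  funext w
  by_cases hw : w = v
  · subst hw
    have hd : outdeg tail w.1 ≤ σ w + numEdges tail head w.1 w.1 :=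
      le_trans h (Nat.le_add_right _ _)
    simp only [toZ, fire, if_pos rfl]
    rw [zfire_apply_self]
    simp only [toZ]
    push_cast [hd]
    ring
  · simp only [toZ, fire, if_neg hw]
    rw [zfire_apply_ne tail head s _ v w (fun hh => hw hh.symm)]
    simp only [toZ]
    push_cast
    ring

lemma legal_iff (σ : Vne s → ℕ) (l : List (Vne s)) :
    Legal tail head σ l ↔ ZLegal tail head s (td tail s) (toZ s σ) l := by
  induction l generalizing σ with
  | nil => simp [Legal, ZLegal]
  | cons v l ih =>
      constructor
      · rintro ⟨h1, h2⟩
        exact ⟨(active_iff tail s σ v).mp h1, by rw [← toZ_fire tail head s h1]; exact (ih _).mp h2⟩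
      · rintro ⟨h1, h2⟩
        have ha := (active_iff tail s σ v).mpr h1
        exact ⟨ha, (ih _).mpr (by rw [toZ_fire tail head s ha]; exact h2)⟩

lemma toZ_fireList {σ : Vne s → ℕ} {l : List (Vne s)} (h : Legal tail head σ l) :
    toZ s (fireList tail head σ l) = zfireList tail head s (toZ s σ) l := by
  induction l generalizing σ with
  | nil => rfl
  | cons v l ih =>
      obtain ⟨h1, h2⟩ := h
      rw [fireList, zfireList, ← toZ_fire tail head s h1]
      exact ih h2


lemma combo_neg (c : Vne s → ℤ) : combo tail head s (fun v => -(c v)) = -combo tail head s c := by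
  funext u
  simp [combo, Finset.sum_neg_distrib]

lemma combo_smul (k : ℤ) (c : Vne s → ℤ) :
    combo tail head s (fun v => k * c v) = fun u => k * combo tail head s c u := by
  funext u
  simp only [combo, Finset.mul_sum]
  exact Finset.sum_congr rfl fun v _ => by ring

lemma td_pos (hg : ∀ v : V, ∃ k, Reach tail head s k v) (u : Vne s) :
    1 ≤ td tail s u := by
  obtain ⟨e, he, -⟩ := dist_step tail head s hg u
  have : 1 ≤ outdeg tail u.1 := by
    rw [outdeg]
    exact Finset.card_pos.mpr ⟨e, by simp [he]⟩
  show (1:ℤ) ≤ (outdeg tail u.1 : ℤ)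
  exact_mod_cast this

/-- every recurrent configuration admits legal "loops" with arbitrarily large firing counts -/
lemma loop_of_recurrent {σ : Vne s → ℕ} (hrec : Recurrent tail head σ) (M : ℕ) :
    ∃ l : List (Vne s),
      ZLegal tail head s (td tail s)
        (toZ s σ + combo tail head s (fun v => (l.count v : ℤ))) l ∧
      zfireList tail head s
        (toZ s σ + combo tail head s (fun v => (l.count v : ℤ))) l = toZ s σ ∧
      ∀ u, (M : ℤ) ≤ (l.count u : ℤ) := by
  obtain ⟨hstable, hacc⟩ := hrec
  set K : ℕ := M * (Fintype.card E + 1) with hK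
  obtain ⟨β, l, hleg, hfire⟩ := hacc (fun u => σ u + K)
  set start : Vne s → ℕ := fun v => (σ v + K) + β v with hstart
  have hlegZ : ZLegal tail head s (td tail s) (toZ s start) l := (legal_iff tail head s _ _).mp hleg
  have hendZ : zfireList tail head s (toZ s start) l = toZ s σ := by
    rw [← toZ_fireList tail head s hleg, hfire]
  have hcombo : combo tail head s (fun v => (l.count v : ℤ)) = toZ s start - toZ s σ := by
    have := hendZ
    rw [zfireList_eq] at this
    funext u
    have := congrFun this u
    simp only [Pi.sub_apply] at this ⊢
    omega
  have hstart_eq : toZ s start = toZ s σ + combo tail head s (fun v => (l.count v : ℤ)) := by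
    rw [hcombo]; funext u; simp
  refine ⟨l, hstart_eq ▸ hlegZ, hstart_eq ▸ hendZ, fun u => ?_⟩
  have h1 : (K : ℤ) ≤ combo tail head s (fun v => (l.count v : ℤ)) u := by
    rw [hcombo]
    simp only [Pi.sub_apply, toZ, hstart]
    push_cast
    omega
  have h2 := combo_le_of_nonneg tail head s
    (c := fun v => (l.count v : ℤ)) (fun v => by positivity) u
  have h3 := outdeg_le_cardE (E := E) tail (v := u.1)
  have h4 : (l.count u : ℤ) * (outdeg tail u.1 : ℤ) ≤
      (l.count u : ℤ) * ((Fintype.card E : ℤ) + 1) := by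
    apply mul_le_mul_of_nonneg_left (by omega) (by positivity)
  have h5 : (M : ℤ) * ((Fintype.card E : ℤ) + 1) ≤
      (l.count u : ℤ) * ((Fintype.card E : ℤ) + 1) := by
    have : ((K : ℕ) : ℤ) = (M : ℤ) * ((Fintype.card E : ℤ) + 1) := by rw [hK]; push_cast; ring
    omega
  have h6 : (0:ℤ) < (Fintype.card E : ℤ) + 1 := by positivity
  exact le_of_mul_le_mul_right h5 h6

/-- key step for uniqueness: if `σ` is recurrent, `τ` is stable and
`σ - τ` is the combination of rows with coefficients `a`, then `a ≥ 0`. -/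
lemma coeff_nonneg {σ τ : Vne s → ℕ} (hσ : Recurrent tail head σ) (hτ : Stable tail τ)
    (a : Vne s → ℤ) (ha : combo tail head s a = toZ s σ - toZ s τ) : ∀ u, 0 ≤ a u := by
  set M : ℕ := (∑ u : Vne s, (a u).natAbs) + 1 with hM
  have haM : ∀ u, (a u).natAbs < M := by
    intro u
    have : (a u).natAbs ≤ ∑ u : Vne s, (a u).natAbs :=
      Finset.single_le_sum (f := fun u : Vne s => (a u).natAbs) (fun _ _ => Nat.zero_le _)
        (mem_univ u)
    omega
  obtain ⟨l, hleg, hend, hcnt⟩ := loop_of_recurrent tail head s hσ M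
  set ν : Vne s → ℤ := toZ s σ + combo tail head s (fun v => (l.count v : ℤ)) with hν
  set c : Vne s → ℕ := fun u => ((l.count u : ℤ) + a u).toNat with hc
  have hcast : ∀ u, ((c u : ℕ) : ℤ) = (l.count u : ℤ) + a u := by
    intro u
    have h1 := hcnt u
    have h2 := haM u
    show ((((l.count u : ℤ) + a u).toNat : ℕ) : ℤ) = (l.count u : ℤ) + a u
    omega
  have hcombo_c : combo tail head s (fun v => ((c v : ℕ) : ℤ)) =
      combo tail head s (fun v => (l.count v : ℤ)) + combo tail head s a := by
    have h0 : (fun v => ((c v : ℕ) : ℤ)) = (fun v => (l.count v : ℤ)) + a := by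
      funext v
      simp [hcast v]
    rw [h0, combo_add]
  have hstab : ∀ u, ν u - combo tail head s (fun v => ((c v : ℕ) : ℤ)) u < td tail s u := by
    intro u
    have hval : combo tail head s (fun v => ((c v : ℕ) : ℤ)) u =
        combo tail head s (fun v => (l.count v : ℤ)) u + combo tail head s a u := by
      rw [hcombo_c]; simp
    rw [hval]
    have h1 : ν u - (combo tail head s (fun v => (l.count v : ℤ)) u +
        combo tail head s a u) = toZ s τ u := by
      rw [hν]
      have := congrFun ha u
      simp only [Pi.sub_apply] at this
      simp only [Pi.add_apply]
      omega
    rw [h1]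
    have := hτ u
    rw [td, toZ]
    exact_mod_cast this
  have hle := least_action tail head s ν c hstab hleg
  intro u
  have h1 := hle u
  have h2 := hcast u
  omega

lemma recurrent_unique {σ τ : Vne s → ℕ} (hσ : Recurrent tail head σ)
    (hτ : Recurrent tail head τ)
    (h : toZ s σ - toZ s τ ∈ rowSpan tail head s) : σ = τ := by
  rw [rowSpan] at h
  obtain ⟨a, ha⟩ := (Submodule.mem_span_range_iff_exists_fun ℤ).mp h
  have hcombo : combo tail head s a = toZ s σ - toZ s τ := by
    rw [← ha]
    funext u
    rw [combo, Finset.sum_apply]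
    exact Finset.sum_congr rfl fun v _ => by simp [row]
  have h1 : ∀ u, 0 ≤ a u := coeff_nonneg tail head s hσ hτ.1 a hcombo
  have h2 : ∀ u, 0 ≤ -(a u) := by
    apply coeff_nonneg tail head s hτ hσ.1
    rw [combo_neg, hcombo]
    funext u; simp
  have ha0 : a = 0 := by
    funext u
    have := h1 u
    have := h2 u
    show a u = 0
    omega
  apply toZ_inj s
  have : combo tail head s a = 0 := by
    rw [ha0]
    funext u
    simp [combo]
  rw [this] at hcombo
  funext u
  have := congrFun hcombo u
  simp only [Pi.sub_apply, Pi.zero_apply] at this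
  omega


/-- legal loops can be iterated -/
lemma loop_iter {σZ δ : Vne s → ℤ} (hδ : ∀ u, 0 ≤ δ u) {l₀ : List (Vne s)}
    (hleg : ZLegal tail head s (td tail s) (fun u => σZ u + δ u) l₀)
    (hend : zfireList tail head s (fun u => σZ u + δ u) l₀ = σZ) :
    ∀ T : ℕ, ∃ l, ZLegal tail head s (td tail s) (fun u => σZ u + (T:ℤ) * δ u) l ∧
      zfireList tail head s (fun u => σZ u + (T:ℤ) * δ u) l = σZ := by
  have hcombo : combo tail head s (fun v => (l₀.count v : ℤ)) = δ := by
    have h := hend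
    rw [zfireList_eq] at h
    funext u
    have := congrFun h u
    simp only [Pi.sub_apply] at this
    omega
  intro T
  induction T with
  | zero =>
      refine ⟨[], trivial, ?_⟩
      show (fun u => σZ u + (0:ℤ) * δ u) = σZ
      funext u; simp
  | succ T ih =>
      obtain ⟨l, hl, he⟩ := ih
      have hmono : ∀ u, (σZ u + δ u) ≤ σZ u + ((T:ℕ)+1 : ℤ) * δ u := by
        intro u
        have h1 : (0:ℤ) ≤ (T:ℤ) * δ u := mul_nonneg (by positivity) (hδ u)
        nlinarith [hδ u]
      have h1 : ZLegal tail head s (td tail s) (fun u => σZ u + ((T:ℕ)+1 : ℤ) * δ u) l₀ :=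
        ZLegal_mono tail head s hmono hleg
      have h2 : zfireList tail head s (fun u => σZ u + ((T:ℕ)+1 : ℤ) * δ u) l₀ =
          fun u => σZ u + (T:ℤ) * δ u := by
        rw [zfireList_eq, hcombo]
        funext u
        simp only [Pi.sub_apply]
        ring
      refine ⟨l₀ ++ l, ?_, ?_⟩
      · have h3 := ZLegal_append tail head s (t := td tail s) _ h1 (by rw [h2]; exact hl)
        convert h3 using 2
        simp
      · have h3 : zfireList tail head s (fun u => σZ u + (((T:ℕ):ℤ)+1) * δ u) (l₀ ++ l) = σZ := by
          rw [zfireList_append, h2, he]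
        convert h3 using 2
        simp

lemma exists_recurrent (hg : ∀ v : V, ∃ k, Reach tail head s k v) (x : Vne s → ℤ) :
    ∃ σ : Vne s → ℕ, Recurrent tail head σ ∧ (toZ s σ - x) ∈ rowSpan tail head s := by
  have htd : ∀ v : Vne s, 1 ≤ td tail s v := td_pos tail head s hg
  obtain ⟨c0, hc0⟩ := pos_rep tail head s hg x
  set ρ : Vne s → ℤ := fun u => x u + combo tail head s (fun v => (c0 v : ℤ)) u with hρ
  have hρ0 : ∀ u, 0 ≤ ρ u := hc0
  obtain ⟨c1, hc1⟩ := pos_rep tail head s hg (fun _ => (-1 : ℤ))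
  set β₁ : Vne s → ℤ := combo tail head s (fun v => (c1 v : ℤ)) with hβ₁def
  have hβ₁ : ∀ u, 1 ≤ β₁ u := by
    intro u
    have := hc1 u
    omega
  have hstabs : ∀ k : ℕ, ∃ l, ZLegal tail head s (td tail s) (fun u => ρ u + (k:ℤ) * β₁ u) l ∧
      ∀ v, zfireList tail head s (fun u => ρ u + (k:ℤ) * β₁ u) l v < td tail s v :=
    fun k => exists_stab tail head s hg htd _
  choose ls hleg hst using hstabs
  set en : ℕ → (Vne s → ℤ) :=
    fun k => zfireList tail head s (fun u => ρ u + (k:ℤ) * β₁ u) (ls k) with hen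
  have hstart0 : ∀ (k : ℕ) w, (0:ℤ) ≤ ρ w + (k:ℤ) * β₁ w := by
    intro k w
    have h1 : (0:ℤ) ≤ (k:ℤ) * β₁ w := mul_nonneg (by positivity) (by have := hβ₁ w; omega)
    have := hρ0 w
    omega
  have hen0 : ∀ k w, 0 ≤ en k w := by
    intro k w
    refine le_trans ?_ (zfireList_lower tail head s (hleg k) w)
    simp only [le_min_iff]
    constructor
    · exact hstart0 k w
    · show (0:ℤ) ≤ (outdeg tail w.1 : ℤ) - (outdeg tail w.1 : ℤ) + (numEdges tail head w.1 w.1 : ℤ)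
      have : (0:ℤ) ≤ (numEdges tail head w.1 w.1 : ℤ) := by positivity
      omega
  have hlt : ∀ (k : ℕ) (v : Vne s), (en k v).toNat < Fintype.card E + 1 := by
    intro k v
    have h1 : en k v < (outdeg tail v.1 : ℤ) := hst k v
    have h2 := hen0 k v
    have h3 := outdeg_le_cardE (E := E) tail (v := v.1)
    omega
  -- pigeonhole : two of the stabilizations coincide
  obtain ⟨k, m, hne, heq⟩ := Finite.exists_ne_map_eq_of_infinite
    (fun (k : ℕ) => fun (v : Vne s) => (⟨(en k v).toNat, hlt k v⟩ : Fin (Fintype.card E + 1)))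
  have hen_eq : en k = en m := by
    funext v
    have h1 := congrFun heq v
    have h2 : (en k v).toNat = (en m v).toNat := congrArg Fin.val h1
    have h3 := hen0 k v
    have h4 := hen0 m v
    omega
  clear heq
  -- symmetric core of the argument
  have key : ∀ k m : ℕ, k < m → en k = en m →
      ∃ σ : Vne s → ℕ, Recurrent tail head σ ∧ (toZ s σ - x) ∈ rowSpan tail head s := by
    clear hen_eq hne k m
    intro k m hkm hkm_eq
    set σZ : Vne s → ℤ := en k with hσZ
    set D : ℕ := m - k with hD
    have hD1 : 1 ≤ D := by omega
    set δ : Vne s → ℤ := fun u => (D:ℤ) * β₁ u with hδdef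
    have hδ0 : ∀ u, 0 ≤ δ u := fun u =>
      mul_nonneg (by positivity) (by have := hβ₁ u; omega)
    have hδ1 : ∀ u, 1 ≤ δ u := by
      intro u
      have h1 : (1:ℤ)*1 ≤ (D:ℤ) * β₁ u :=
        mul_le_mul (by exact_mod_cast hD1) (hβ₁ u) one_pos.le (by positivity)
      show (1:ℤ) ≤ (D:ℤ) * β₁ u
      linarith
    have hmD : ((m:ℕ):ℤ) = (k:ℤ) + (D:ℤ) := by push_cast; omega
    have hνm : ∀ u, ρ u + (m:ℤ) * β₁ u = (ρ u + (k:ℤ) * β₁ u) + δ u := by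
      intro u
      rw [hmD, hδdef]
      ring
    -- run the k-stabilization from the m-start
    have hlegk' : ZLegal tail head s (td tail s) (fun u => ρ u + (m:ℤ) * β₁ u) (ls k) := by
      apply ZLegal_mono tail head s (ν := fun u => ρ u + (k:ℤ) * β₁ u) _ (hleg k)
      intro u
      show ρ u + (k:ℤ) * β₁ u ≤ ρ u + (m:ℤ) * β₁ u
      rw [hνm u]
      have := hδ0 u
      omega
    have hmid : zfireList tail head s (fun u => ρ u + (m:ℤ) * β₁ u) (ls k) =
        fun u => σZ u + δ u := by
      rw [zfireList_eq]
      funext u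
      have h1 : σZ u = (ρ u + (k:ℤ) * β₁ u) -
          combo tail head s (fun v => ((ls k).count v : ℤ)) u := by
        show zfireList tail head s (fun u => ρ u + (k:ℤ) * β₁ u) (ls k) u = _
        rw [zfireList_eq]
        rfl
      simp only [Pi.sub_apply]
      rw [hνm u]
      omega
    obtain ⟨l', hl', hst'⟩ := exists_stab tail head s hg htd (fun u => σZ u + δ u)
    -- both stabilizing sequences from the m-start have the same firing counts
    have hL1leg : ZLegal tail head s (td tail s) (fun u => ρ u + (m:ℤ) * β₁ u) (ls k ++ l') :=
      ZLegal_append tail head s _ hlegk' (by rw [hmid]; exact hl')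
    have hL1end : zfireList tail head s (fun u => ρ u + (m:ℤ) * β₁ u) (ls k ++ l') =
        zfireList tail head s (fun u => σZ u + δ u) l' := by
      rw [zfireList_append, hmid]
    have hstab_m : ∀ u, (fun u => ρ u + (m:ℤ) * β₁ u) u -
        combo tail head s (fun v => ((ls m).count v : ℤ)) u < td tail s u := by
      intro u
      have h1 := hst m u
      rw [zfireList_eq] at h1
      simpa using h1
    have hstab_L1 : ∀ u, (fun u => ρ u + (m:ℤ) * β₁ u) u -
        combo tail head s (fun v => ((ls k ++ l').count v : ℤ)) u < td tail s u := by
      intro u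
      have h1 := hst' u
      rw [← hL1end, zfireList_eq] at h1
      simpa using h1
    have hcnt1 : ∀ u, (ls k ++ l').count u ≤ (ls m).count u :=
      least_action tail head s _ (fun u => (ls m).count u) hstab_m hL1leg
    have hcnt2 : ∀ u, (ls m).count u ≤ (ls k ++ l').count u :=
      least_action tail head s _ (fun u => (ls k ++ l').count u) hstab_L1 (hleg m)
    have hcnt : ∀ u : Vne s, (((ls k ++ l').count u : ℕ) : ℤ) = ((ls m).count u : ℤ) := by
      intro u
      have := hcnt1 u
      have := hcnt2 u
      omega
    -- hence the second stabilization ends at σZ again : we get a loop at σZ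
    have hend' : zfireList tail head s (fun u => σZ u + δ u) l' = σZ := by
      have h4 : zfireList tail head s (fun u => ρ u + (m:ℤ) * β₁ u) (ls k ++ l') =
          zfireList tail head s (fun u => ρ u + (m:ℤ) * β₁ u) (ls m) := by
        rw [zfireList_eq, zfireList_eq]
        have h5 : (fun v => (((ls k ++ l').count v : ℕ) : ℤ)) =
            (fun v => (((ls m).count v : ℕ) : ℤ)) := by
          funext v
          exact hcnt v
        rw [h5]
      rw [← hL1end, h4]
      exact hkm_eq.symm
    -- σZ as a natural-number configuration
    set σn : Vne s → ℕ := fun u => (σZ u).toNat with hσn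
    have htoZσ : toZ s σn = σZ := by
      funext u
      have h5 : σZ u = en k u := rfl
      have := hen0 k u
      show ((σZ u).toNat : ℤ) = σZ u
      omega
    have hσstable : Stable tail σn := by
      intro v
      have h1 : σZ v < (outdeg tail v.1 : ℤ) := hst k v
      have h2 : (0:ℤ) ≤ σZ v := hen0 k v
      show (σZ v).toNat < outdeg tail v.1
      omega
    refine ⟨σn, ⟨hσstable, ?_⟩, ?_⟩
    · -- accessibility via iterated loops
      intro ζ
      set T : ℕ := ∑ u : Vne s, ζ u with hT
      have hTζ : ∀ u, ζ u ≤ T :=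
        fun u => Finset.single_le_sum (f := fun u : Vne s => ζ u)
          (fun _ _ => Nat.zero_le _) (mem_univ u)
      obtain ⟨lT, hlT, heT⟩ := loop_iter tail head s hδ0 hl' hend' T
      have hβnn : ∀ u, (0:ℤ) ≤ σZ u + (T:ℤ) * δ u - (ζ u : ℤ) := by
        intro u
        have h1 : ((T:ℕ):ℤ) * 1 ≤ (T:ℤ) * δ u :=
          mul_le_mul_of_nonneg_left (hδ1 u) (by positivity)
        have h2 : (0:ℤ) ≤ σZ u := hen0 k u
        have h3 := hTζ u
        have h4 : ((ζ u : ℕ) : ℤ) ≤ ((T:ℕ):ℤ) := by exact_mod_cast h3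
        omega
      refine ⟨fun u => (σZ u + (T:ℤ) * δ u - (ζ u : ℤ)).toNat, lT, ?_, ?_⟩
      · rw [legal_iff]
        have hstart : toZ s (fun v => ζ v + (σZ v + (T:ℤ) * δ v - (ζ v : ℤ)).toNat) =
            fun u => σZ u + (T:ℤ) * δ u := by
          funext u
          have := hβnn u
          show ((ζ u + (σZ u + (T:ℤ) * δ u - (ζ u : ℤ)).toNat : ℕ) : ℤ) =
            σZ u + (T:ℤ) * δ u
          push_cast
          omega
        rw [hstart]
        exact hlT
      · apply toZ_inj s
        have hlegn : Legal tail head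
            (fun v => ζ v + (σZ v + (T:ℤ) * δ v - (ζ v : ℤ)).toNat) lT := by
          rw [legal_iff]
          have hstart : toZ s (fun v => ζ v + (σZ v + (T:ℤ) * δ v - (ζ v : ℤ)).toNat) =
              fun u => σZ u + (T:ℤ) * δ u := by
            funext u
            have := hβnn u
            show ((ζ u + (σZ u + (T:ℤ) * δ u - (ζ u : ℤ)).toNat : ℕ) : ℤ) =
              σZ u + (T:ℤ) * δ u
            push_cast
            omega
          rw [hstart]
          exact hlT
        rw [toZ_fireList tail head s hlegn, htoZσ]
        have hstart : toZ s (fun v => ζ v + (σZ v + (T:ℤ) * δ v - (ζ v : ℤ)).toNat) =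
            fun u => σZ u + (T:ℤ) * δ u := by
          funext u
          have := hβnn u
          show ((ζ u + (σZ u + (T:ℤ) * δ u - (ζ u : ℤ)).toNat : ℕ) : ℤ) =
            σZ u + (T:ℤ) * δ u
          push_cast
          omega
        rw [hstart, heT]
    · -- membership in the row span
      have hmem : toZ s σn - x = combo tail head s
          (fun v => (c0 v : ℤ) + (k:ℤ) * (c1 v : ℤ) - ((ls k).count v : ℤ)) := by
        rw [htoZσ]
        funext u
        have h1 : σZ u = (ρ u + (k:ℤ) * β₁ u) -
            combo tail head s (fun v => ((ls k).count v : ℤ)) u := by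
          show zfireList tail head s (fun u => ρ u + (k:ℤ) * β₁ u) (ls k) u = _
          rw [zfireList_eq]
          rfl
        have h2 : combo tail head s
            (fun v => (c0 v : ℤ) + (k:ℤ) * (c1 v : ℤ) - ((ls k).count v : ℤ)) u =
            combo tail head s (fun v => (c0 v : ℤ)) u +
              (k:ℤ) * combo tail head s (fun v => (c1 v : ℤ)) u -
              combo tail head s (fun v => ((ls k).count v : ℤ)) u := by
          rw [show (fun v => (c0 v : ℤ) + (k:ℤ) * (c1 v : ℤ) - ((ls k).count v : ℤ)) =
              (fun v => ((c0 v : ℤ) + (k:ℤ) * (c1 v : ℤ))) - (fun v => ((ls k).count v : ℤ))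
              from rfl, combo_sub]
          simp only [Pi.sub_apply]
          congr 1
          rw [show (fun v => ((c0 v : ℤ) + (k:ℤ) * (c1 v : ℤ))) =
              (fun v => (c0 v : ℤ)) + (fun v => (k:ℤ) * (c1 v : ℤ)) from rfl, combo_add]
          simp only [Pi.add_apply]
          congr 1
          rw [combo_smul]
        simp only [Pi.sub_apply]
        rw [h2, h1, hρ, hβ₁def]
        ring
      rw [hmem, rowSpan]
      exact combo_mem_rowSpan tail head s _
  rcases hne.lt_or_gt with h | h
  · exact key k m h hen_eq
  · exact key m k h hen_eq.symm

end Chip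

/-- **Unique recurrent representatives.**  For a digraph with a global sink, every
equivalence class of `ℤ^{n-1}` modulo the integer row span of the reduced Laplacian
contains exactly one recurrent chip configuration. -/
theorem exists_unique_recurrent_in_class
    {V E : Type} [Fintype V] [DecidableEq V] [Fintype E]
    (tail head : E → V)
    (s : V) (hs : outdeg tail s = 0)
    (hglobal : ∀ v : V,
      Relation.ReflTransGen (fun a b => ∃ e, tail e = a ∧ head e = b) v s)
    (x : Vne s → ℤ) :
    ∃! σ : Vne s → ℕ, Recurrent tail head σ ∧
      ((fun v => (σ v : ℤ)) - x) ∈ rowSpan tail head s := by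
  have hg : ∀ v : V, ∃ k, Chip.Reach tail head s k v := Chip.reach_exists tail head s hglobal
  obtain ⟨σ, hrec, hmem⟩ := Chip.exists_recurrent tail head s hg x
  have hmem' : ((fun v => (σ v : ℤ)) - x) ∈ rowSpan tail head s := hmem
  refine ⟨σ, ⟨hrec, hmem'⟩, ?_⟩
  rintro τ ⟨hτrec, hτmem⟩
  apply Chip.recurrent_unique tail head s hτrec hrec
  have h1 := Submodule.sub_mem _ hτmem hmem'
  have h2 : ((fun v => (τ v : ℤ)) - x) - ((fun v => (σ v : ℤ)) - x) =
      Chip.toZ s τ - Chip.toZ s σ := by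
    funext u
    simp [Chip.toZ]
  rwa [h2] at h1
end

section
/- Let G be a digraph with a globally reachable vertex w (from every other vertex there is a directed path to w). For any starting vertex and any rotor configuration, iterating the rotor-router operation a suitable finite number of times yields a state in which the chip is at w. -/
/-- The rotor-router operation on single-chip-and-rotor states `(u, ρ)`: if the chip
is at a non-sink vertex `u`, the rotor at `u` advances to the next edge in the cyclic
ordering of outgoing edges at `u` and the chip moves along that edge; states with the
chip at a sink are left unchanged (the chip stops there). -/
def rotorStep {V E : Type} [Fintype E] [DecidableEq V] (tail head : E → V)
    (next : E → E) (p : V × (V → E)) : V × (V → E) :=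
  if outdeg tail p.1 = 0 then p
  else (head (next (p.2 p.1)), Function.update p.2 p.1 (next (p.2 p.1)))

/-- **The chip reaches any globally reachable vertex.**  If `w` is globally reachable
(from every vertex there is a directed path to `w`), then for any starting vertex `v₀`
and any rotor configuration `ρ₀`, iterating the rotor-router operation a suitable
finite number of times yields a state in which the chip is at `w`. -/
theorem rotor_walk_reaches_globally_reachable
    {V E : Type} [Fintype V] [DecidableEq V] [Fintype E]
    (tail head : E → V) (next : E → E)
    (hnext : ∀ e, tail (next e) = tail e)
    (hcyc : ∀ e e' : E, tail e = tail e' → ∃ k, next^[k] e = e')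
    (w : V)
    (hglobal : ∀ v : V,
      Relation.ReflTransGen (fun a b => ∃ e, tail e = a ∧ head e = b) v w)
    (v₀ : V) (ρ₀ : V → E)
    (hρ₀ : ∀ v : V, outdeg tail v ≠ 0 → tail (ρ₀ v) = v) :
    ∃ n : ℕ, ((rotorStep tail head next)^[n] (v₀, ρ₀)).1 = w := by
  by_contra hcon
  push_neg at hcon
  set s : ℕ → V × (V → E) := fun n => (rotorStep tail head next)^[n] (v₀, ρ₀) with hs
  -- no sink is ever visited
  have hB : ∀ n, outdeg tail (s n).1 ≠ 0 := by
    intro n h0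
    rcases (hglobal (s n).1).cases_head with heq | ⟨b, ⟨e, he, _⟩, _⟩
    · exact hcon n heq
    · have hmem : e ∈ Finset.univ.filter (fun e' => tail e' = (s n).1) := by simp [he]
      rw [outdeg, Finset.card_eq_zero] at h0
      simp [h0] at hmem
  -- one-step formula
  have hstep : ∀ n, s (n + 1) =
      (head (next ((s n).2 (s n).1)),
        Function.update (s n).2 (s n).1 (next ((s n).2 (s n).1))) := by
    intro n
    have : s (n + 1) = rotorStep tail head next (s n) := by
      rw [hs]; exact Function.iterate_succ_apply' _ _ _
    rw [this, rotorStep, if_neg (hB n)]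
  -- rotor tail invariant
  have hA : ∀ n v, outdeg tail v ≠ 0 → tail ((s n).2 v) = v := by
    intro n
    induction n with
    | zero => exact hρ₀
    | succ n ih =>
      intro v hv
      have h2 : (s (n + 1)).2 = Function.update (s n).2 (s n).1 (next ((s n).2 (s n).1)) :=
        congrArg Prod.snd (hstep n)
      rw [h2]
      by_cases hveq : v = (s n).1
      · subst hveq
        rw [Function.update_self, hnext]
        exact ih _ hv
      · rw [Function.update_of_ne hveq]
        exact ih v hv
  -- rotor value is next-iterate of initial, counted by visits
  have hC : ∀ n v, (s n).2 v = next^[Nat.count (fun m => (s m).1 = v) n] (ρ₀ v) := by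
    intro n
    induction n with
    | zero => intro v; simp [hs]
    | succ n ih =>
      intro v
      have h2 : (s (n + 1)).2 = Function.update (s n).2 (s n).1 (next ((s n).2 (s n).1)) :=
        congrArg Prod.snd (hstep n)
      rw [h2, Nat.count_succ]
      by_cases hveq : (s n).1 = v
      · subst hveq
        rw [Function.update_self, if_pos rfl, ih]
        exact (Function.iterate_succ_apply' next _ _).symm
      · rw [Function.update_of_ne (fun h => hveq h.symm), if_neg hveq]
        exact ih v
  -- closure of "visited infinitely often" under out-edges
  have hclosure : ∀ v, {n | (s n).1 = v}.Infinite →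
      ∀ e, tail e = v → {n | (s n).1 = head e}.Infinite := by
    intro v hv e hte
    have hdv : outdeg tail v ≠ 0 := by
      obtain ⟨n₀, hn₀⟩ := hv.nonempty
      exact hn₀ ▸ hB n₀
    obtain ⟨k, hk⟩ := hcyc (ρ₀ v) e (by rw [hρ₀ v hdv, hte])
    obtain ⟨p₁, hp₁⟩ := hcyc (next e) e (hnext e)
    have hper : next^[p₁ + 1] e = e := by
      rw [Function.iterate_succ_apply]; exact hp₁
    set P : ℕ → Prop := fun m => (s m).1 = v with hP
    have hPinf : {n | P n}.Infinite := hv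
    apply Set.infinite_of_injective_forall_mem
      (f := fun j : ℕ => Nat.nth P (k + p₁ + j * (p₁ + 1)) + 1)
    · intro a b hab
      have h1 := (Nat.nth_strictMono hPinf).injective (Nat.succ_injective hab)
      have h3 : a * (p₁ + 1) = b * (p₁ + 1) := Nat.add_left_cancel h1
      exact Nat.eq_of_mul_eq_mul_right (Nat.succ_pos _) h3
    · intro j
      set m := k + p₁ + j * (p₁ + 1) with hm
      set n := Nat.nth P m with hn
      have hmemP : (s n).1 = v := Nat.nth_mem_of_infinite hPinf m
      have hcount : Nat.count P n = m := Nat.count_nth_of_infinite hPinf m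
      show (s (n + 1)).1 = head e
      rw [hstep n, hmemP]
      have hrv : (s n).2 v = next^[m] (ρ₀ v) := by
        rw [hC n v, hcount]
      rw [hrv]
      have : next^[m + 1] (ρ₀ v) = e := by
        have hm1 : m + 1 = (p₁ + 1) * (j + 1) + k := by rw [hm]; ring
        rw [hm1, Function.iterate_add_apply, hk, Function.iterate_mul]
        exact Function.iterate_fixed hper (j + 1)
      rw [← Function.iterate_succ_apply' next m, this]
  -- some vertex is visited infinitely often
  obtain ⟨v, hv⟩ := Finite.exists_infinite_fiber (fun n => (s n).1)
  have hv' : {n | (s n).1 = v}.Infinite := by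
    rw [← Set.infinite_coe_iff]
    exact hv
  -- propagate along a path to w
  have key : ∀ u, Relation.ReflTransGen (fun a b => ∃ e, tail e = a ∧ head e = b) u w →
      {n | (s n).1 = u}.Infinite → {n | (s n).1 = w}.Infinite := by
    intro u hpath
    induction hpath using Relation.ReflTransGen.head_induction_on with
    | refl => exact id
    | head hab _ ih =>
      intro hu
      obtain ⟨e, hte, hhe⟩ := hab
      exact ih (hhe ▸ hclosure _ hu e hte)
  obtain ⟨n, hn⟩ := (key v (hglobal v) hv').nonempty
  exact hcon n hn
end

section
/- Let G be a digraph with a global sink and let v be a non-sink vertex of G. The chip addition operator E_v is a permutation of the set of acyclic rotor configurations on G. -/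
/-- Rotor configurations on the non-sink vertices. -/
abbrev RotorConfig {V E : Type} (tail : E → V) (s : V) : Type :=
  {ρ : Vne s → E // ∀ v, tail (ρ v) = v.1}

/-- One step of rotor-router walk for a single chip: if the chip is at a non-sink
vertex `u`, the rotor at `u` advances to the next edge in the cyclic ordering and the
chip moves along it; once the chip is at the sink it stays there. -/
def chipStep {V E : Type} [DecidableEq V] (tail head : E → V) (next : E → E)
    (hnext : ∀ e, tail (next e) = tail e) (s : V)
    (p : V × RotorConfig tail s) : V × RotorConfig tail s :=
  if h : p.1 = s then p
  else
    (head (next (p.2.1 ⟨p.1, h⟩)),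
     ⟨Function.update p.2.1 ⟨p.1, h⟩ (next (p.2.1 ⟨p.1, h⟩)), by
        intro u
        rcases eq_or_ne u ⟨p.1, h⟩ with h' | h'
        · rw [h', Function.update_self, hnext]
          exact p.2.2 ⟨p.1, h⟩
        · rw [Function.update_of_ne h']
          exact p.2.2 u⟩)

/-- The chip addition operator `E_v` as a relation: `Routes v ρ ρ'` holds when a chip
added at `v` and routed by rotor-router walk reaches the sink, leaving the rotor
configuration `ρ'`. -/
def Routes {V E : Type} [DecidableEq V] (tail head : E → V) (next : E → E)
    (hnext : ∀ e, tail (next e) = tail e) (s : V)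
    (v : Vne s) (ρ ρ' : RotorConfig tail s) : Prop :=
  ∃ n : ℕ, (chipStep tail head next hnext s)^[n] (v.1, ρ) = (s, ρ')

/-- The vertex-successor map of a rotor configuration (fixing the sink). -/
def rotorSucc {V E : Type} [DecidableEq V] (tail head : E → V) (s : V)
    (ρ : RotorConfig tail s) : V → V :=
  fun u => if h : u = s then u else head (ρ.1 ⟨u, h⟩)

/-- A rotor configuration is acyclic when its edges `{ρ(v)}` contain no directed
cycle; equivalently, they form an oriented spanning tree rooted at the sink. -/
def RAcyclic {V E : Type} [DecidableEq V] (tail head : E → V) (s : V)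
    (ρ : RotorConfig tail s) : Prop :=
  ∀ (v : Vne s) (k : ℕ), 0 < k → (rotorSucc tail head s ρ)^[k] v.1 ≠ v.1

set_option linter.unusedSectionVars false

section RotorAux

variable {V E : Type} [Fintype V] [DecidableEq V] [Fintype E]
variable (tail head : E → V) (next : E → E)

lemma tail_iter (hnext : ∀ e, tail (next e) = tail e) :
    ∀ (k : ℕ) (e : E), tail (next^[k] e) = tail e := by
  intro k e
  induction k with
  | zero => rfl
  | succ k ih => rw [Function.iterate_succ_apply', hnext, ih]

lemma next_surjClass (hnext : ∀ e, tail (next e) = tail e)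
    (hcyc : ∀ e e' : E, tail e = tail e' → ∃ k, next^[k] e = e') (e : E) :
    ∃ e', tail e' = tail e ∧ next e' = e := by
  obtain ⟨k, hk⟩ := hcyc (next e) e (hnext e)
  refine ⟨next^[k] e, tail_iter tail next hnext k e, ?_⟩
  rw [← Function.iterate_succ_apply' next k e, Function.iterate_succ_apply]
  exact hk

lemma next_injClass (hnext : ∀ e, tail (next e) = tail e)
    (hcyc : ∀ e e' : E, tail e = tail e' → ∃ k, next^[k] e = e') {e₁ e₂ : E}
    (ht : tail e₁ = tail e₂) (h : next e₁ = next e₂) : e₁ = e₂ := by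
  classical
  let N : {f : E // tail f = tail e₁} → {f : E // tail f = tail e₁} :=
    fun f => ⟨next f.1, by rw [hnext f.1, f.2]⟩
  have hsurj : Function.Surjective N := by
    rintro ⟨f, hf⟩
    obtain ⟨e', h1, h2⟩ := next_surjClass tail next hnext hcyc f
    exact ⟨⟨e', by rw [h1, hf]⟩, Subtype.ext h2⟩
  have hinj : Function.Injective N := Finite.injective_iff_surjective.mpr hsurj
  have h2 := hinj (a₁ := ⟨e₁, rfl⟩) (a₂ := ⟨e₂, ht.symm⟩) (Subtype.ext h)
  exact congrArg Subtype.val h2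

lemma exists_min' {p : ℕ → Prop} (h : ∃ n, p n) : ∃ n, p n ∧ ∀ m, m < n → ¬ p m := by
  classical
  exact ⟨Nat.find h, Nat.find_spec h, fun m hm => Nat.find_min h hm⟩

lemma iterate_agree {α : Type} {f g : α → α} {w u : α} {m : ℕ}
    (hagree : ∀ z, z ≠ w → g z = f z) (hm : ∀ j, j < m → f^[j] u ≠ w) :
    ∀ j, j ≤ m → g^[j] u = f^[j] u := by
  intro j hj
  induction j with
  | zero => rfl
  | succ j ih =>
    rw [Function.iterate_succ_apply', Function.iterate_succ_apply',
      ih (Nat.le_of_succ_le hj), hagree _ (hm j (Nat.lt_of_succ_le hj))]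

lemma iterate_mul_fix {α : Type} (f : α → α) (z : α) (p : ℕ) (hp : f^[p] z = z) :
    ∀ t, f^[p * t] z = z := by
  intro t
  induction t with
  | zero => simp
  | succ t ih => rw [Nat.mul_succ, Function.iterate_add_apply, hp, ih]

lemma iterate_mod' {α : Type} (f : α → α) (z : α) (p m : ℕ) (hp : f^[p] z = z) :
    f^[m] z = f^[m % p] z := by
  conv_lhs => rw [← Nat.mod_add_div m p]
  rw [Function.iterate_add_apply, iterate_mul_fix f z p hp]

end RotorAux
section Dyn

variable {V E : Type} [Fintype V] [DecidableEq V] [Fintype E]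
variable (tail head : E → V) (next : E → E)
variable (hnext : ∀ e, tail (next e) = tail e) (s : V)

/-- Successor map of a configuration, augmented with `s ↦ vv`. -/
def gS (vv : V) (ρ : RotorConfig tail s) : V → V :=
  fun u => if h : u = s then vv else head (ρ.1 ⟨u, h⟩)

/-- Unicycle condition: every vertex reaches the chip. -/
def UCP (vv : V) (p : V × RotorConfig tail s) : Prop :=
  ∀ u : V, ∃ m, (gS tail head s vv p.2)^[m] u = p.1

/-- Augmented step: from the sink the chip jumps back to `vv`. -/
def AStepD (vv : V) (p : V × RotorConfig tail s) : V × RotorConfig tail s :=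
  if p.1 = s then (vv, p.2) else chipStep tail head next hnext s p

lemma gS_s (vv : V) (ρ : RotorConfig tail s) : gS tail head s vv ρ s = vv := by
  unfold gS; rw [dif_pos rfl]

lemma gS_ne (vv : V) (ρ : RotorConfig tail s) (z : V) (hz : z ≠ s) :
    gS tail head s vv ρ z = head (ρ.1 ⟨z, hz⟩) := by
  unfold gS; rw [dif_neg hz]

lemma chipStep_fst (p : V × RotorConfig tail s) (h : p.1 ≠ s) :
    (chipStep tail head next hnext s p).1 = head (next (p.2.1 ⟨p.1, h⟩)) := by
  simp only [chipStep]; rw [dif_neg h]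

lemma chipStep_snd (p : V × RotorConfig tail s) (h : p.1 ≠ s) (w : Vne s) :
    (chipStep tail head next hnext s p).2.1 w =
      if w.1 = p.1 then next (p.2.1 w) else p.2.1 w := by
  simp only [chipStep]; rw [dif_neg h]
  show Function.update p.2.1 ⟨p.1, h⟩ (next (p.2.1 ⟨p.1, h⟩)) w =
    if w.1 = p.1 then next (p.2.1 w) else p.2.1 w
  by_cases hw : w = (⟨p.1, h⟩ : Vne s)
  · subst hw; simp [Function.update_self]
  · rw [Function.update_of_ne hw, if_neg (fun hc => hw (Subtype.ext hc))]

lemma rotorSucc_ne (ρ : RotorConfig tail s) (z : V) (hz : z ≠ s) :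
    rotorSucc tail head s ρ z = head (ρ.1 ⟨z, hz⟩) := by
  unfold rotorSucc; rw [dif_neg hz]

lemma chipStep_sink (p : V × RotorConfig tail s) (h : p.1 = s) :
    chipStep tail head next hnext s p = p := by
  simp only [chipStep]; rw [dif_pos h]

lemma chipStep_iter_sink (p : V × RotorConfig tail s) (h : p.1 = s) (k : ℕ) :
    (chipStep tail head next hnext s)^[k] p = p := by
  induction k with
  | zero => rfl
  | succ k ih => rw [Function.iterate_succ_apply', ih, chipStep_sink tail head next hnext s p h]

lemma AStepD_pos (vv : V) (p : V × RotorConfig tail s) (h : p.1 ≠ s) :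
    AStepD tail head next hnext s vv p = chipStep tail head next hnext s p := by
  unfold AStepD; rw [if_neg h]

lemma AStepD_sink (vv : V) (p : V × RotorConfig tail s) (h : p.1 = s) :
    AStepD tail head next hnext s vv p = (vv, p.2) := by
  unfold AStepD; rw [if_pos h]

lemma A_eq_chip (vv : V) (p : V × RotorConfig tail s) (n : ℕ)
    (h : ∀ k, k < n → ((chipStep tail head next hnext s)^[k] p).1 ≠ s) :
    (AStepD tail head next hnext s vv)^[n] p = (chipStep tail head next hnext s)^[n] p := by
  induction n with
  | zero => rfl
  | succ n ih =>
    rw [Function.iterate_succ_apply', Function.iterate_succ_apply',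
      ih (fun k hk => h k (hk.trans n.lt_succ_self)),
      AStepD_pos tail head next hnext s vv _ (h n n.lt_succ_self)]

lemma chip_eq_A (vv : V) (p : V × RotorConfig tail s) (n : ℕ)
    (h : ∀ k, k < n → (((AStepD tail head next hnext s vv)^[k]) p).1 ≠ s) :
    (chipStep tail head next hnext s)^[n] p = (AStepD tail head next hnext s vv)^[n] p := by
  induction n with
  | zero => rfl
  | succ n ih =>
    rw [Function.iterate_succ_apply', Function.iterate_succ_apply',
      ← ih (fun k hk => h k (hk.trans n.lt_succ_self)),
      AStepD_pos tail head next hnext s vv _ ?_]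
    rw [ih (fun k hk => h k (hk.trans n.lt_succ_self))]
    exact h n n.lt_succ_self

lemma agree_until (vv : V) (ρ : RotorConfig tail s) (z : V) :
    ∀ m, (∀ j, j < m → (rotorSucc tail head s ρ)^[j] z ≠ s) →
      (gS tail head s vv ρ)^[m] z = (rotorSucc tail head s ρ)^[m] z := by
  intro m hm
  induction m with
  | zero => rfl
  | succ m ih =>
    rw [Function.iterate_succ_apply', Function.iterate_succ_apply',
      ih (fun j hj => hm j (hj.trans m.lt_succ_self))]
    have hz := hm m m.lt_succ_self
    rw [gS_ne tail head s vv ρ _ hz, rotorSucc_ne tail head s ρ _ hz]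

lemma rotorSucc_iter_sink (ρ : RotorConfig tail s) (t : ℕ) :
    (rotorSucc tail head s ρ)^[t] s = s := by
  induction t with
  | zero => rfl
  | succ t ih =>
    rw [Function.iterate_succ_apply', ih]
    unfold rotorSucc; rw [dif_pos rfl]

lemma reach_s (vv : V) (ρ : RotorConfig tail s) (hρ : RAcyclic tail head s ρ) (u : V) :
    ∃ m, (gS tail head s vv ρ)^[m] u = s := by
  by_contra hno
  push_neg at hno
  have hnor : ∀ m, (rotorSucc tail head s ρ)^[m] u ≠ s := by
    intro m
    induction m using Nat.strong_induction_on with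
    | _ m ih =>
      have h1 := agree_until tail head s vv ρ u m (fun j hj => ih j hj)
      rw [← h1]; exact hno m
  have hagree : ∀ m, (gS tail head s vv ρ)^[m] u = (rotorSucc tail head s ρ)^[m] u :=
    fun m => agree_until tail head s vv ρ u m (fun j _ => hnor j)
  have key : ∀ a b : ℕ, a < b →
      (rotorSucc tail head s ρ)^[a] u = (rotorSucc tail head s ρ)^[b] u → False := by
    intro a b hab he
    have h1 : (rotorSucc tail head s ρ)^[b-a] ((rotorSucc tail head s ρ)^[a] u)
        = (rotorSucc tail head s ρ)^[a] u := by
      rw [← Function.iterate_add_apply, Nat.sub_add_cancel hab.le, ← he]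
    exact hρ ⟨_, hnor a⟩ (b-a) (by omega) h1
  obtain ⟨a, b, hab, he⟩ := Finite.exists_ne_map_eq_of_infinite
    (fun m : ℕ => (rotorSucc tail head s ρ)^[m] u)
  rcases lt_or_gt_of_ne hab with h | h
  · exact key a b h he
  · exact key b a h he.symm

lemma RAcyclic_of_UCP (vv : V) (ρ' : RotorConfig tail s)
    (h : UCP tail head s vv (s, ρ')) : RAcyclic tail head s ρ' := by
  intro w k hk hit
  have hnor : ∀ j, (rotorSucc tail head s ρ')^[j] w.1 ≠ s := by
    intro j hj
    have h1 : ∀ t, (rotorSucc tail head s ρ')^[k*t] w.1 = w.1 :=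
      iterate_mul_fix _ _ k hit
    have hle : j + 1 ≤ k * (j+1) := Nat.le_mul_of_pos_left _ hk
    have h2 : (rotorSucc tail head s ρ')^[k*(j+1)] w.1 = s := by
      rw [show k*(j+1) = (k*(j+1) - j) + j by omega, Function.iterate_add_apply, hj,
        rotorSucc_iter_sink]
    rw [h1 (j+1)] at h2
    exact w.2 h2
  obtain ⟨m, hm⟩ := h w.1
  rw [show ((s, ρ') : V × RotorConfig tail s).1 = s from rfl] at hm
  rw [agree_until tail head s vv ρ' w.1 m (fun j _ => hnor j)] at hm
  exact hnor m hm

lemma UCP_start (v : Vne s) (ρ : RotorConfig tail s) (hρ : RAcyclic tail head s ρ) :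
    UCP tail head s v.1 (v.1, ρ) := by
  intro u
  obtain ⟨m, hm⟩ := reach_s tail head s v.1 ρ hρ u
  refine ⟨m+1, ?_⟩
  rw [Function.iterate_succ_apply', hm]
  exact gS_s tail head s v.1 ρ

lemma UCP_sink_state (vv : V) (ρ' : RotorConfig tail s) (hρ' : RAcyclic tail head s ρ') :
    UCP tail head s vv (s, ρ') := fun u => reach_s tail head s vv ρ' hρ' u

end Dyn
section Dyn2

variable {V E : Type} [Fintype V] [DecidableEq V] [Fintype E]
variable (tail head : E → V) (next : E → E)
variable (hnext : ∀ e, tail (next e) = tail e) (s : V)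

lemma gS_agree_off (vv : V) (ρ σ : RotorConfig tail s) (x : V)
    (hcfg : ∀ w : Vne s, w.1 ≠ x → ρ.1 w = σ.1 w) :
    ∀ z, z ≠ x → gS tail head s vv ρ z = gS tail head s vv σ z := by
  intro z hz
  by_cases hzs : z = s
  · subst hzs; rw [gS_s, gS_s]
  · rw [gS_ne tail head s vv ρ z hzs, gS_ne tail head s vv σ z hzs, hcfg ⟨z, hzs⟩ hz]

lemma UCP_chipStep (vv : V) (p : V × RotorConfig tail s) (hp : p.1 ≠ s)
    (h : UCP tail head s vv p) : UCP tail head s vv (chipStep tail head next hnext s p) := by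
  intro u
  obtain ⟨m, hm, hmin⟩ := exists_min' (h u)
  have hagree : ∀ z, z ≠ p.1 →
      gS tail head s vv (chipStep tail head next hnext s p).2 z = gS tail head s vv p.2 z := by
    refine gS_agree_off tail head s vv _ _ p.1 ?_
    intro w hw
    rw [chipStep_snd tail head next hnext s p hp w, if_neg hw]
  have hconv := iterate_agree hagree hmin m le_rfl
  refine ⟨m + 1, ?_⟩
  rw [Function.iterate_succ_apply', hconv, hm,
    gS_ne tail head s vv _ p.1 hp, chipStep_snd tail head next hnext s p hp, if_pos rfl,
    chipStep_fst tail head next hnext s p hp]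

lemma UCP_AStepD (vv : V) (p : V × RotorConfig tail s)
    (h : UCP tail head s vv p) : UCP tail head s vv (AStepD tail head next hnext s vv p) := by
  by_cases hp : p.1 = s
  · rw [AStepD_sink tail head next hnext s vv p hp]
    intro u
    obtain ⟨m, hm⟩ := h u
    exact ⟨m + 1, by rw [Function.iterate_succ_apply', hm, hp, gS_s]⟩
  · rw [AStepD_pos tail head next hnext s vv p hp]
    exact UCP_chipStep tail head next hnext s vv p hp h

lemma UCP_AStepD_iter (vv : V) (p : V × RotorConfig tail s)
    (h : UCP tail head s vv p) (n : ℕ) :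
    UCP tail head s vv ((AStepD tail head next hnext s vv)^[n] p) := by
  induction n with
  | zero => exact h
  | succ n ih => rw [Function.iterate_succ_apply']; exact UCP_AStepD tail head next hnext s vv _ ih

lemma A_mixed_false (vv : V) (p q : V × RotorConfig tail s)
    (hps : p.1 = s) (hqs : q.1 ≠ s)
    (hp : UCP tail head s vv p) (hq : UCP tail head s vv q)
    (h : AStepD tail head next hnext s vv p = AStepD tail head next hnext s vv q) : False := by
  rw [AStepD_sink tail head next hnext s vv p hps, AStepD_pos tail head next hnext s vv q hqs] at h
  have hv_eq : vv = (chipStep tail head next hnext s q).1 := by rw [← h]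
  have hcfg : p.2 = (chipStep tail head next hnext s q).2 := by rw [← h]
  -- facts about σ := p.2 relative to τ := q.2
  have hσx : p.2.1 ⟨q.1, hqs⟩ = next (q.2.1 ⟨q.1, hqs⟩) := by
    rw [hcfg, chipStep_snd tail head next hnext s q hqs, if_pos rfl]
  have hσw : ∀ w : Vne s, w.1 ≠ q.1 → p.2.1 w = q.2.1 w := by
    intro w hw
    rw [hcfg, chipStep_snd tail head next hnext s q hqs, if_neg hw]
  have hhead : head (p.2.1 ⟨q.1, hqs⟩) = vv := by
    rw [hσx, hv_eq, chipStep_fst tail head next hnext s q hqs]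
  have hagree : ∀ z, z ≠ q.1 →
      gS tail head s vv p.2 z = gS tail head s vv q.2 z :=
    gS_agree_off tail head s vv p.2 q.2 q.1 hσw
  -- m : minimal gτ-time vv → q.1
  obtain ⟨m, hm, hmin⟩ := exists_min' (hq vv)
  have hconv : (gS tail head s vv p.2)^[m] vv = q.1 := by
    have := iterate_agree (f := gS tail head s vv q.2) (g := gS tail head s vv p.2)
      (w := q.1) (u := vv) hagree hmin m le_rfl
    rw [this, hm]
  have hgx : gS tail head s vv p.2 q.1 = vv := by
    rw [gS_ne tail head s vv p.2 q.1 hqs]; exact hhead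
  have hper : (gS tail head s vv p.2)^[m+1] vv = vv := by
    rw [Function.iterate_succ_apply', hconv, hgx]
  obtain ⟨k, hk⟩ := hp vv
  rw [hps] at hk
  have hgs : gS tail head s vv p.2 s = vv := gS_s tail head s vv p.2
  have hks : (gS tail head s vv p.2)^[k+1] vv = vv := by
    rw [Function.iterate_succ_apply', hk, hgs]
  -- compute gS^[m + (m+1)*k] vv two ways
  set g := gS tail head s vv p.2 with hg
  have w1 : g^[m + (m+1)*k] vv = q.1 := by
    rw [Function.iterate_add_apply, iterate_mul_fix g vv (m+1) hper k, hconv]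
  have w2 : g^[k + (k+1)*m] vv = s := by
    rw [Function.iterate_add_apply, iterate_mul_fix g vv (k+1) hks m, hk]
  have harith : m + (m+1)*k = k + (k+1)*m := by ring
  rw [harith, w2] at w1
  exact hqs w1.symm
end Dyn2
section Dyn3

variable {V E : Type} [Fintype V] [DecidableEq V] [Fintype E]
variable (tail head : E → V) (next : E → E)
variable (hnext : ∀ e, tail (next e) = tail e) (s : V)

lemma A_inj_nonsink (hcyc : ∀ e e' : E, tail e = tail e' → ∃ k, next^[k] e = e')
    (vv : V) (p q : V × RotorConfig tail s)
    (hps : p.1 ≠ s) (hqs : q.1 ≠ s)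
    (hp : UCP tail head s vv p) (hq : UCP tail head s vv q)
    (h : chipStep tail head next hnext s p = chipStep tail head next hnext s q) : p = q := by
  have hcfg : (chipStep tail head next hnext s p).2 = (chipStep tail head next hnext s q).2 := by
    rw [h]
  have hy : (chipStep tail head next hnext s p).1 = (chipStep tail head next hnext s q).1 := by
    rw [h]
  by_cases hx : p.1 = q.1
  · -- same position
    have hval : ∀ w : Vne s, p.2.1 w = q.2.1 w := by
      intro w
      have h1 : (chipStep tail head next hnext s p).2.1 w
          = (chipStep tail head next hnext s q).2.1 w := by rw [hcfg]
      rw [chipStep_snd tail head next hnext s p hps w,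
        chipStep_snd tail head next hnext s q hqs w] at h1
      by_cases hw : w.1 = p.1
      · rw [if_pos hw, if_pos (hw.trans hx)] at h1
        exact next_injClass tail next hnext hcyc ((p.2.2 w).trans (q.2.2 w).symm) h1
      · rwa [if_neg hw, if_neg (fun hc => hw (hc.trans hx.symm))] at h1
    exact Prod.ext_iff.mpr ⟨hx, Subtype.ext (funext hval)⟩
  · exfalso
    set σ' := (chipStep tail head next hnext s p).2 with hσ'
    set y := (chipStep tail head next hnext s p).1 with hy0
    set g' := gS tail head s vv σ' with hg'
    have hcfg2 : (chipStep tail head next hnext s p).2 = (chipStep tail head next hnext s q).2 :=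
      hσ'.symm.trans hcfg
    have hg1 : g' p.1 = y := by
      rw [hg', gS_ne tail head s vv σ' p.1 hps]
      have e1 : σ'.1 ⟨p.1, hps⟩ = next (p.2.1 ⟨p.1, hps⟩) := by
        rw [hσ', chipStep_snd tail head next hnext s p hps, if_pos rfl]
      rw [e1, ← chipStep_fst tail head next hnext s p hps, ← hy0]
    have hg2 : g' q.1 = y := by
      rw [hg', gS_ne tail head s vv σ' q.1 hqs]
      have e1 : σ'.1 ⟨q.1, hqs⟩ = next (q.2.1 ⟨q.1, hqs⟩) := by
        rw [hσ', hcfg2, chipStep_snd tail head next hnext s q hqs, if_pos rfl]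
      rw [e1, ← chipStep_fst tail head next hnext s q hqs, ← hy]
    have hagp : ∀ z, z ≠ p.1 → g' z = gS tail head s vv p.2 z := by
      refine gS_agree_off tail head s vv σ' p.2 p.1 ?_
      intro w hw
      rw [hσ', chipStep_snd tail head next hnext s p hps, if_neg hw]
    have hagq : ∀ z, z ≠ q.1 → g' z = gS tail head s vv q.2 z := by
      refine gS_agree_off tail head s vv σ' q.2 q.1 ?_
      intro w hw
      rw [hσ', hcfg2, chipStep_snd tail head next hnext s q hqs, if_neg hw]
    obtain ⟨mp, hmp, hminp⟩ := exists_min' (hp y)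
    have hA1 : ∃ m, g'^[m] y = p.1 :=
      ⟨mp, by rw [iterate_agree hagp hminp mp le_rfl, hmp]⟩
    obtain ⟨mq, hmq, hminq⟩ := exists_min' (hq y)
    have hA2 : ∃ m, g'^[m] y = q.1 :=
      ⟨mq, by rw [iterate_agree hagq hminq mq le_rfl, hmq]⟩
    obtain ⟨m₁, hm₁, hmin₁⟩ := exists_min' hA1
    obtain ⟨m₂, hm₂, hmin₂⟩ := exists_min' hA2
    have key : ∀ (a b : ℕ) (za zb : V), a < b → g'^[a] y = za → g' za = y →
        g'^[b] y = zb → (∀ j, j < b → g'^[j] y ≠ zb) → False := by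
      intro a b za zb hab ha hza hb hbmin
      have hper : g'^[a+1] y = y := by rw [Function.iterate_succ_apply', ha, hza]
      have hmod := iterate_mod' g' y (a+1) b hper
      have hlt : b % (a+1) < b := lt_of_lt_of_le (Nat.mod_lt _ (Nat.succ_pos a)) hab
      exact hbmin _ hlt (by rw [← hmod, hb])
    rcases lt_trichotomy m₁ m₂ with hlt | heq | hlt
    · exact key m₁ m₂ p.1 q.1 hlt hm₁ hg1 hm₂ hmin₂
    · exact hx (by rw [← hm₁, heq, hm₂])
    · exact key m₂ m₁ q.1 p.1 hlt hm₂ hg2 hm₁ hmin₁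

lemma AStepD_inj (hcyc : ∀ e e' : E, tail e = tail e' → ∃ k, next^[k] e = e')
    (vv : V) (p q : V × RotorConfig tail s)
    (hp : UCP tail head s vv p) (hq : UCP tail head s vv q)
    (h : AStepD tail head next hnext s vv p = AStepD tail head next hnext s vv q) : p = q := by
  by_cases hps : p.1 = s <;> by_cases hqs : q.1 = s
  · rw [AStepD_sink tail head next hnext s vv p hps,
      AStepD_sink tail head next hnext s vv q hqs] at h
    exact Prod.ext_iff.mpr ⟨hps.trans hqs.symm, (Prod.ext_iff.mp h).2⟩
  · exact absurd h (fun hh => A_mixed_false tail head next hnext s vv p q hps hqs hp hq hh)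
  · exact absurd h.symm (fun hh => A_mixed_false tail head next hnext s vv q p hqs hps hq hp hh)
  · rw [AStepD_pos tail head next hnext s vv p hps,
      AStepD_pos tail head next hnext s vv q hqs] at h
    exact A_inj_nonsink tail head next hnext s hcyc vv p q hps hqs hp hq h

lemma AStepD_iter_inj (hcyc : ∀ e e' : E, tail e = tail e' → ∃ k, next^[k] e = e')
    (vv : V) : ∀ (n : ℕ) (p q : V × RotorConfig tail s),
    UCP tail head s vv p → UCP tail head s vv q →
    (AStepD tail head next hnext s vv)^[n] p = (AStepD tail head next hnext s vv)^[n] q →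
    p = q := by
  intro n
  induction n with
  | zero => intro p q _ _ h; exact h
  | succ n ih =>
    intro p q hp hq h
    rw [Function.iterate_succ_apply, Function.iterate_succ_apply] at h
    exact AStepD_inj tail head next hnext s hcyc vv p q hp hq
      (ih _ _ (UCP_AStepD tail head next hnext s vv p hp)
        (UCP_AStepD tail head next hnext s vv q hq) h)

end Dyn3
section Dyn4

variable {V E : Type} [Fintype V] [DecidableEq V] [Fintype E]
variable (tail head : E → V) (next : E → E)
variable (hnext : ∀ e, tail (next e) = tail e) (s : V)

/-- If the walk never reaches the sink it is eventually periodic; then every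
out-neighbour of a visited vertex is visited, contradicting global reachability. -/
lemma term_core (hcyc : ∀ e e' : E, tail e = tail e' → ∃ k, next^[k] e = e')
    (hglobal : ∀ u : V,
      Relation.ReflTransGen (fun a b => ∃ e, tail e = a ∧ head e = b) u s)
    (p₀ : V × RotorConfig tail s) (i j : ℕ) (hij : i < j)
    (heq : (chipStep tail head next hnext s)^[i] p₀ = (chipStep tail head next hnext s)^[j] p₀)
    (hns : ∀ t, ((chipStep tail head next hnext s)^[t] p₀).1 ≠ s) : False := by
  classical
  set X : ℕ → V := fun t => ((chipStep tail head next hnext s)^[t] p₀).1 with hX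
  set C : ℕ → RotorConfig tail s := fun t => ((chipStep tail head next hnext s)^[t] p₀).2 with hC
  have hXs : ∀ t, X t ≠ s := hns
  have hstate : ∀ t, (chipStep tail head next hnext s)^[t+1] p₀
      = chipStep tail head next hnext s ((chipStep tail head next hnext s)^[t] p₀) :=
    fun t => Function.iterate_succ_apply' _ t p₀
  have hstep_pos : ∀ t, X (t+1) = head (next ((C t).1 ⟨X t, hXs t⟩)) := by
    intro t
    show ((chipStep tail head next hnext s)^[t+1] p₀).1 = _
    rw [hstate t]
    exact chipStep_fst tail head next hnext s _ (hXs t)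
  have hstep_cfg : ∀ (t : ℕ) (w : Vne s),
      (C (t+1)).1 w = if w.1 = X t then next ((C t).1 w) else (C t).1 w := by
    intro t w
    show ((chipStep tail head next hnext s)^[t+1] p₀).2.1 w = _
    rw [hstate t]
    exact chipStep_snd tail head next hnext s _ (hXs t) w
  set R : Set V := {u | ∃ t, i ≤ t ∧ t < j ∧ X t = u} with hR
  have hXij : X i = X j := by rw [hX]; exact congrArg Prod.fst heq
  have hCij : C i = C j := by rw [hC]; exact congrArg Prod.snd heq
  have hRclosed : ∀ u ∈ R, ∀ e, tail e = u → head e ∈ R := by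
    rintro u ⟨t₀, ht₀i, ht₀j, ht₀⟩ e he
    have hu : u ≠ s := ht₀ ▸ hXs t₀
    set r : ℕ → E := fun t => (C t).1 ⟨u, hu⟩ with hr0
    have hr : ∀ t, r (t+1) = if u = X t then next (r t) else r t := fun t =>
      hstep_cfg t ⟨u, hu⟩
    have htail : ∀ t, tail (r t) = u := fun t => (C t).2 ⟨u, hu⟩
    have hrconst : ∀ a b, a ≤ b → (∀ t, a ≤ t → t < b → X t ≠ u) → r b = r a := by
      intro a b hab hno
      induction b, hab using Nat.le_induction with
      | base => rfl
      | succ b hab ih =>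
        rw [hr b, if_neg (fun hc => hno b hab b.lt_succ_self hc.symm)]
        exact ih (fun t h1 h2 => hno t h1 (h2.trans b.lt_succ_self))
    have rij : r j = r i := by rw [hr0]; show (C j).1 _ = (C i).1 _; rw [hCij]
    have C' : ∀ (n t : ℕ), j - t = n → t ≤ j → (∃ t', t ≤ t' ∧ t' < j ∧ X t' = u) →
        ∃ ts, t ≤ ts ∧ ts < j ∧ X ts = u ∧ r ts = r t := by
      intro n
      induction n with
      | zero =>
        intro t hjt htj hex
        obtain ⟨t', h1, h2, _⟩ := hex
        omega
      | succ n ih =>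
        intro t hjt htj hex
        by_cases hXt : X t = u
        · have ht : t < j := by
            obtain ⟨t', h1, h2, _⟩ := hex
            omega
          exact ⟨t, le_rfl, ht, hXt, rfl⟩
        · have ht : t < j := by omega
          have hex' : ∃ t', t+1 ≤ t' ∧ t' < j ∧ X t' = u := by
            obtain ⟨t', h1, h2, h3⟩ := hex
            have : t' ≠ t := fun hc => hXt (hc ▸ h3)
            exact ⟨t', by omega, h2, h3⟩
          obtain ⟨ts, h1, h2, h3, h4⟩ := ih (t+1) (by omega) (by omega) hex'
          refine ⟨ts, by omega, h2, h3, ?_⟩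
          rw [h4, hr t, if_neg (fun hc => hXt hc.symm)]
    have Cfull : ∀ t, i ≤ t → t ≤ j → ∃ ts, i ≤ ts ∧ ts < j ∧ X ts = u ∧ r ts = r t := by
      intro t hit htj
      by_cases hex : ∃ t', t ≤ t' ∧ t' < j ∧ X t' = u
      · obtain ⟨ts, h1, h2, h3, h4⟩ := C' (j - t) t rfl htj hex
        exact ⟨ts, le_trans hit h1, h2, h3, h4⟩
      · push_neg at hex
        have h5 : r j = r t := hrconst t j htj (fun t' h1 h2 h3 => hex t' h1 h2 h3)
        obtain ⟨ts, h1, h2, h3, h4⟩ := C' (j - i) i rfl hij.le ⟨t₀, ht₀i, ht₀j, ht₀⟩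
        exact ⟨ts, h1, h2, h3, by rw [h4, ← rij, h5]⟩
    have hQ : ∀ k, ∃ t, i ≤ t ∧ t < j ∧ X t = u ∧ r t = next^[k] (r t₀) := by
      intro k
      induction k with
      | zero => exact Cfull t₀ ht₀i ht₀j.le
      | succ k ih =>
        obtain ⟨t, h1, h2, h3, h4⟩ := ih
        have h5 : r (t+1) = next^[k+1] (r t₀) := by
          rw [hr t, if_pos h3.symm, h4, ← Function.iterate_succ_apply' next k (r t₀)]
        obtain ⟨ts, g1, g2, g3, g4⟩ := Cfull (t+1) (by omega) (by omega)
        exact ⟨ts, g1, g2, g3, by rw [g4, h5]⟩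
    obtain ⟨e', he't, he'n⟩ := next_surjClass tail next hnext hcyc e
    obtain ⟨k, hk⟩ := hcyc (r t₀) e' (by rw [htail t₀, he't, he])
    obtain ⟨t, h1, h2, h3, h4⟩ := hQ k
    have h5 : X (t+1) = head e := by
      rw [hstep_pos t, show (C t).1 ⟨X t, hXs t⟩ = r t from congrArg (C t).1 (Subtype.ext h3),
        h4, hk, he'n]
    by_cases h6 : t + 1 < j
    · exact ⟨t+1, by omega, h6, h5⟩
    · have h7 : t + 1 = j := by omega
      exact ⟨i, le_rfl, hij, by rw [hXij, ← h7]; exact h5⟩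
  have hsR : s ∈ R := by
    have hstep : ∀ b, Relation.ReflTransGen (fun a b => ∃ e, tail e = a ∧ head e = b) (X i) b
        → b ∈ R := by
      intro b hb
      induction hb with
      | refl => exact ⟨i, le_rfl, hij, rfl⟩
      | tail h₁ h₂ ih =>
        obtain ⟨e, he1, he2⟩ := h₂
        exact he2 ▸ hRclosed _ ih e he1
    exact hstep s (hglobal (X i))
  obtain ⟨t, _, _, hts⟩ := hsR
  exact hXs t hts

end Dyn4
section Dyn5

variable {V E : Type} [Fintype V] [DecidableEq V] [Fintype E]
variable (tail head : E → V) (next : E → E)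
variable (hnext : ∀ e, tail (next e) = tail e) (s : V)

/-- A nontrivial closed chip excursion `v → v` avoiding the sink is impossible when the
final configuration is acyclic. -/
lemma segment_false (v : Vne s) (ρ₁ ρ₂ : RotorConfig tail s) (d : ℕ) (hd : 0 < d)
    (hseg : (chipStep tail head next hnext s)^[d] (v.1, ρ₂) = (v.1, ρ₁))
    (hns : ∀ t, t ≤ d → ((chipStep tail head next hnext s)^[t] (v.1, ρ₂)).1 ≠ s)
    (h1 : RAcyclic tail head s ρ₁) : False := by
  classical
  set X : ℕ → V := fun t => ((chipStep tail head next hnext s)^[t] (v.1, ρ₂)).1 with hX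
  set C : ℕ → RotorConfig tail s :=
    fun t => ((chipStep tail head next hnext s)^[t] (v.1, ρ₂)).2 with hC
  have hstate : ∀ t, (chipStep tail head next hnext s)^[t+1] (v.1, ρ₂)
      = chipStep tail head next hnext s ((chipStep tail head next hnext s)^[t] (v.1, ρ₂)) :=
    fun t => Function.iterate_succ_apply' _ t _
  have hstep_pos : ∀ t, t < d → ∀ (ht : X t ≠ s), X (t+1) = head (next ((C t).1 ⟨X t, ht⟩)) := by
    intro t _ ht
    show ((chipStep tail head next hnext s)^[t+1] (v.1, ρ₂)).1 = _
    rw [hstate t]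
    exact chipStep_fst tail head next hnext s _ ht
  have hstep_cfg : ∀ (t : ℕ), t < d → ∀ (w : Vne s),
      (C (t+1)).1 w = if w.1 = X t then next ((C t).1 w) else (C t).1 w := by
    intro t htd w
    show ((chipStep tail head next hnext s)^[t+1] (v.1, ρ₂)).2.1 w = _
    rw [hstate t]
    exact chipStep_snd tail head next hnext s _ (hns t htd.le) w
  have hXd : X d = v.1 := by rw [hX]; exact congrArg Prod.fst hseg
  have hCd : C d = ρ₁ := by rw [hC]; exact congrArg Prod.snd hseg
  set U : Set V := {u | ∃ t, t < d ∧ X t = u} with hU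
  have hUv : v.1 ∈ U := ⟨0, hd, rfl⟩
  have hUs : ∀ u ∈ U, u ≠ s := by rintro u ⟨t, htd, ht⟩; exact ht ▸ hns t htd.le
  have hUc : ∀ u, u ∈ U → ∀ (hu : u ≠ s), head (ρ₁.1 ⟨u, hu⟩) ∈ U := by
    rintro u ⟨t₀, ht₀, hXt₀⟩ hu
    set T := Nat.findGreatest (fun t => X t = u) (d-1) with hT
    have ht₀le : t₀ ≤ d - 1 := by omega
    have hPT : X T = u := Nat.findGreatest_spec (P := fun t => X t = u) (m := t₀) ht₀le hXt₀
    have hTd : T ≤ d - 1 := Nat.findGreatest_le (P := fun t => X t = u) _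
    have hTmax : ∀ t, T < t → t < d → X t ≠ u := by
      intro t h1' h2'
      exact Nat.findGreatest_is_greatest (P := fun t => X t = u) h1' (by omega)
    have hTd' : T < d := by omega
    set r : ℕ → E := fun t => (C t).1 ⟨u, hu⟩ with hr0
    have hr : ∀ t, t < d → r (t+1) = if u = X t then next (r t) else r t := fun t htd =>
      hstep_cfg t htd ⟨u, hu⟩
    have hconst : ∀ b, T+1 ≤ b → b ≤ d → r b = r (T+1) := by
      intro b hb1 hb2
      induction b, hb1 using Nat.le_induction with
      | base => rfl
      | succ b hb ih =>
        rw [hr b (by omega), if_neg (fun hc => hTmax b (by omega) (by omega) hc.symm)]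
        exact ih (by omega)
    have hrT : r (T+1) = next (r T) := by rw [hr T hTd', if_pos hPT.symm]
    have hXT1 : X (T+1) = head (next (r T)) := by
      rw [hstep_pos T hTd' (hns T hTd'.le),
        show (C T).1 ⟨X T, hns T hTd'.le⟩ = r T from congrArg (C T).1 (Subtype.ext hPT)]
    have hρ₁u : ρ₁.1 ⟨u, hu⟩ = next (r T) := by
      rw [← hCd]
      show r d = _
      rw [hconst d (by omega) le_rfl, hrT]
    rw [hρ₁u, ← hXT1]
    by_cases hT1 : T + 1 < d
    · exact ⟨T+1, hT1, rfl⟩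
    · have : T + 1 = d := by omega
      rw [this, hXd]
      exact hUv
  have horb : ∀ k, (rotorSucc tail head s ρ₁)^[k] v.1 ∈ U := by
    intro k
    induction k with
    | zero => exact hUv
    | succ k ih =>
      rw [Function.iterate_succ_apply']
      have hzs := hUs _ ih
      rw [rotorSucc_ne tail head s ρ₁ _ hzs]
      exact hUc _ ih hzs
  have key : ∀ a b : ℕ, a < b →
      (rotorSucc tail head s ρ₁)^[a] v.1 = (rotorSucc tail head s ρ₁)^[b] v.1 → False := by
    intro a b hab he
    have h2 : (rotorSucc tail head s ρ₁)^[b-a] ((rotorSucc tail head s ρ₁)^[a] v.1)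
        = (rotorSucc tail head s ρ₁)^[a] v.1 := by
      rw [← Function.iterate_add_apply, Nat.sub_add_cancel hab.le, ← he]
    exact h1 ⟨_, hUs _ (horb a)⟩ (b-a) (by omega) h2
  obtain ⟨a, b, hab, he⟩ := Finite.exists_ne_map_eq_of_infinite
    (fun k : ℕ => (rotorSucc tail head s ρ₁)^[k] v.1)
  rcases lt_or_gt_of_ne hab with h | h
  · exact key a b h he
  · exact key b a h he.symm

end Dyn5
section Dyn6

variable {V E : Type} [Fintype V] [DecidableEq V] [Fintype E]
variable (tail head : E → V) (next : E → E)
variable (hnext : ∀ e, tail (next e) = tail e) (s : V)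

lemma inj_aux (hcyc : ∀ e e' : E, tail e = tail e' → ∃ k, next^[k] e = e')
    (v : Vne s) (ρ₁ ρ₂ ρ' : RotorConfig tail s)
    (h₁ : RAcyclic tail head s ρ₁) (h₂ : RAcyclic tail head s ρ₂) (a₁ a₂ : ℕ)
    (ha₁ : (chipStep tail head next hnext s)^[a₁] (v.1, ρ₁) = (s, ρ'))
    (hm₁ : ∀ k, k < a₁ → ((chipStep tail head next hnext s)^[k] (v.1, ρ₁)).1 ≠ s)
    (ha₂ : (chipStep tail head next hnext s)^[a₂] (v.1, ρ₂) = (s, ρ'))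
    (hm₂ : ∀ k, k < a₂ → ((chipStep tail head next hnext s)^[k] (v.1, ρ₂)).1 ≠ s)
    (hle : a₁ ≤ a₂) : ρ₁ = ρ₂ := by
  have e₁ : (AStepD tail head next hnext s v.1)^[a₁] (v.1, ρ₁) = (s, ρ') := by
    rw [A_eq_chip tail head next hnext s v.1 (v.1, ρ₁) a₁ hm₁]; exact ha₁
  have e₂ : (AStepD tail head next hnext s v.1)^[a₂] (v.1, ρ₂) = (s, ρ') := by
    rw [A_eq_chip tail head next hnext s v.1 (v.1, ρ₂) a₂ hm₂]; exact ha₂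
  have e₃ : (AStepD tail head next hnext s v.1)^[a₁]
      ((AStepD tail head next hnext s v.1)^[a₂ - a₁] (v.1, ρ₂))
      = (AStepD tail head next hnext s v.1)^[a₁] (v.1, ρ₁) := by
    rw [← Function.iterate_add_apply, show a₁ + (a₂ - a₁) = a₂ by omega, e₂, e₁]
  have e₄ : (AStepD tail head next hnext s v.1)^[a₂ - a₁] (v.1, ρ₂) = (v.1, ρ₁) :=
    AStepD_iter_inj tail head next hnext s hcyc v.1 a₁ _ _
      (UCP_AStepD_iter tail head next hnext s v.1 _
        (UCP_start tail head s v ρ₂ h₂) (a₂ - a₁))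
      (UCP_start tail head s v ρ₁ h₁) e₃
  rcases Nat.eq_zero_or_pos (a₂ - a₁) with h0 | hpos
  · rw [h0] at e₄
    exact ((Prod.ext_iff.mp e₄).2).symm
  · exfalso
    have e₅ : (chipStep tail head next hnext s)^[a₂ - a₁] (v.1, ρ₂) = (v.1, ρ₁) := by
      rw [← A_eq_chip tail head next hnext s v.1 (v.1, ρ₂) (a₂ - a₁)
        (fun k hk => hm₂ k (by omega))]
      exact e₄
    apply segment_false tail head next hnext s v ρ₁ ρ₂ (a₂ - a₁) hpos e₅ ?_ h₁
    intro t ht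
    rcases lt_or_eq_of_le ht with h | h
    · exact hm₂ t (by omega)
    · rw [h, e₅]; exact v.2

end Dyn6

/-- **`E_v` permutes acyclic rotor configurations.**  On a digraph with a global sink,
the chip addition operator `E_v` maps acyclic rotor configurations to acyclic rotor
configurations, injectively and surjectively. -/
theorem chip_addition_permutes_acyclic_rotor_configurations
    {V E : Type} [Fintype V] [DecidableEq V] [Fintype E]
    (tail head : E → V) (next : E → E)
    (hnext : ∀ e, tail (next e) = tail e)
    (hcyc : ∀ e e' : E, tail e = tail e' → ∃ k, next^[k] e = e')
    (s : V) (hs : ∀ e : E, tail e ≠ s)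
    (hglobal : ∀ v : V,
      Relation.ReflTransGen (fun a b => ∃ e, tail e = a ∧ head e = b) v s)
    (v : Vne s) :
    (∀ ρ : RotorConfig tail s, RAcyclic tail head s ρ →
        ∃ ρ', RAcyclic tail head s ρ' ∧ Routes tail head next hnext s v ρ ρ') ∧
    (∀ ρ₁ ρ₂ ρ' : RotorConfig tail s, RAcyclic tail head s ρ₁ → RAcyclic tail head s ρ₂ →
        Routes tail head next hnext s v ρ₁ ρ' → Routes tail head next hnext s v ρ₂ ρ' →
        ρ₁ = ρ₂) ∧
    (∀ ρ' : RotorConfig tail s, RAcyclic tail head s ρ' →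
        ∃ ρ, RAcyclic tail head s ρ ∧ Routes tail head next hnext s v ρ ρ') := by
  classical
  -- first-arrival extraction
  have firstArrival : ∀ ρ ρ' : RotorConfig tail s, Routes tail head next hnext s v ρ ρ' →
      ∃ a, (chipStep tail head next hnext s)^[a] (v.1, ρ) = (s, ρ') ∧
        ∀ k, k < a → ((chipStep tail head next hnext s)^[k] (v.1, ρ)).1 ≠ s := by
    intro ρ ρ' ⟨n, hn⟩
    have hex : ∃ m, ((chipStep tail head next hnext s)^[m] (v.1, ρ)).1 = s :=
      ⟨n, by rw [hn]⟩
    obtain ⟨a, ha, hmin⟩ := exists_min' hex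
    have h4 : a ≤ n := by
      by_contra hc
      push_neg at hc
      exact hmin n hc (by rw [hn])
    have h5 : (chipStep tail head next hnext s)^[n] (v.1, ρ)
        = (chipStep tail head next hnext s)^[a] (v.1, ρ) := by
      rw [show n = (n - a) + a by omega, Function.iterate_add_apply,
        chipStep_iter_sink tail head next hnext s _ ha (n - a)]
    refine ⟨a, by rw [← h5, hn], fun k hk => hmin k hk⟩
  refine ⟨?_, ?_, ?_⟩
  · -- part 1 : well-defined with acyclic image
    intro ρ hρ
    have hterm : ∃ n, ((chipStep tail head next hnext s)^[n] (v.1, ρ)).1 = s := by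
      by_contra hno
      push_neg at hno
      have key : ∀ a b : ℕ, a < b →
          (chipStep tail head next hnext s)^[a] (v.1, ρ)
            = (chipStep tail head next hnext s)^[b] (v.1, ρ) → False :=
        fun a b h he => term_core tail head next hnext s hcyc hglobal (v.1, ρ) a b h he hno
      obtain ⟨a, b, hab, he⟩ := Finite.exists_ne_map_eq_of_infinite
        (fun t : ℕ => (chipStep tail head next hnext s)^[t] (v.1, ρ))
      rcases lt_or_gt_of_ne hab with h | h
      · exact key a b h he
      · exact key b a h he.symm
    obtain ⟨n₀, hn₀, hmin⟩ := exists_min' hterm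
    have hstate : (chipStep tail head next hnext s)^[n₀] (v.1, ρ)
        = (s, ((chipStep tail head next hnext s)^[n₀] (v.1, ρ)).2) :=
      Prod.ext_iff.mpr ⟨hn₀, rfl⟩
    refine ⟨((chipStep tail head next hnext s)^[n₀] (v.1, ρ)).2, ?_, ⟨n₀, hstate⟩⟩
    have hA := A_eq_chip tail head next hnext s v.1 (v.1, ρ) n₀ hmin
    have hUC : UCP tail head s v.1 ((chipStep tail head next hnext s)^[n₀] (v.1, ρ)) := by
      rw [← hA]
      exact UCP_AStepD_iter tail head next hnext s v.1 _
        (UCP_start tail head s v ρ hρ) n₀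
    rw [hstate] at hUC
    exact RAcyclic_of_UCP tail head s v.1 _ hUC
  · -- part 2 : injectivity
    intro ρ₁ ρ₂ ρ' h₁ h₂ hr₁ hr₂
    obtain ⟨a₁, ha₁, hm₁⟩ := firstArrival ρ₁ ρ' hr₁
    obtain ⟨a₂, ha₂, hm₂⟩ := firstArrival ρ₂ ρ' hr₂
    rcases le_total a₁ a₂ with hle | hle
    · exact inj_aux tail head next hnext s hcyc v ρ₁ ρ₂ ρ' h₁ h₂ a₁ a₂ ha₁ hm₁ ha₂ hm₂ hle
    · exact (inj_aux tail head next hnext s hcyc v ρ₂ ρ₁ ρ' h₂ h₁ a₂ a₁ ha₂ hm₂ ha₁ hm₁ hle).symm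
  · -- part 3 : surjectivity
    intro ρ' hρ'
    have hUC₀ : UCP tail head s v.1 ((s : V), ρ') :=
      UCP_sink_state tail head s v.1 ρ' hρ'
    have key : ∀ a b : ℕ, a < b →
        (AStepD tail head next hnext s v.1)^[a] ((s : V), ρ')
          = (AStepD tail head next hnext s v.1)^[b] ((s : V), ρ') →
        ∃ ρ, RAcyclic tail head s ρ ∧ Routes tail head next hnext s v ρ ρ' := by
      intro a b hab he
      have hper : (AStepD tail head next hnext s v.1)^[b - a] ((s : V), ρ') = ((s : V), ρ') := by
        apply AStepD_iter_inj tail head next hnext s hcyc v.1 a _ _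
          (UCP_AStepD_iter tail head next hnext s v.1 _ hUC₀ (b - a)) hUC₀
        rw [← Function.iterate_add_apply, show a + (b - a) = b by omega]
        exact he.symm
      set P := b - a with hP
      have hPpos : 0 < P := by omega
      set T := Nat.findGreatest
        (fun t => ((AStepD tail head next hnext s v.1)^[t] ((s : V), ρ')).1 = s) (P - 1) with hT
      have hspec : ((AStepD tail head next hnext s v.1)^[T] ((s : V), ρ')).1 = s :=
        Nat.findGreatest_spec
          (P := fun t => ((AStepD tail head next hnext s v.1)^[t] ((s : V), ρ')).1 = s)
          (m := 0) (Nat.zero_le _) rfl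
      have hTle : T ≤ P - 1 := Nat.findGreatest_le
        (P := fun t => ((AStepD tail head next hnext s v.1)^[t] ((s : V), ρ')).1 = s) _
      have hgr : ∀ t, T < t → t < P →
          ((AStepD tail head next hnext s v.1)^[t] ((s : V), ρ')).1 ≠ s := by
        intro t h1' h2'
        exact Nat.findGreatest_is_greatest
          (P := fun t => ((AStepD tail head next hnext s v.1)^[t] ((s : V), ρ')).1 = s)
          h1' (by omega)
      set σ := ((AStepD tail head next hnext s v.1)^[T] ((s : V), ρ')).2 with hσ
      have hT1 : (AStepD tail head next hnext s v.1)^[T+1] ((s : V), ρ') = (v.1, σ) := by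
        rw [Function.iterate_succ_apply',
          AStepD_sink tail head next hnext s v.1 _ hspec]
      have hUCσ : UCP tail head s v.1
          ((AStepD tail head next hnext s v.1)^[T] ((s : V), ρ')) :=
        UCP_AStepD_iter tail head next hnext s v.1 _ hUC₀ T
      have hsσ : (AStepD tail head next hnext s v.1)^[T] ((s : V), ρ') = ((s : V), σ) :=
        Prod.ext_iff.mpr ⟨hspec, rfl⟩
      rw [hsσ] at hUCσ
      have hRA : RAcyclic tail head s σ := RAcyclic_of_UCP tail head s v.1 σ hUCσ
      have hchip : (chipStep tail head next hnext s)^[P - (T+1)] (v.1, σ) = ((s : V), ρ') := by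
        have hkpos : ∀ k, k < P - (T+1) →
            ((AStepD tail head next hnext s v.1)^[k]
              ((AStepD tail head next hnext s v.1)^[T+1] ((s : V), ρ'))).1 ≠ s := by
          intro k hk
          rw [← Function.iterate_add_apply]
          exact hgr (k + (T+1)) (by omega) (by omega)
        have h7 := chip_eq_A tail head next hnext s v.1
          ((AStepD tail head next hnext s v.1)^[T+1] ((s : V), ρ')) (P - (T+1)) hkpos
        rw [← hT1, h7, ← Function.iterate_add_apply,
          show P - (T+1) + (T+1) = P by omega]
        exact hper
      exact ⟨σ, hRA, ⟨P - (T+1), hchip⟩⟩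
    obtain ⟨a, b, hab, he⟩ := Finite.exists_ne_map_eq_of_infinite
      (fun t : ℕ => (AStepD tail head next hnext s v.1)^[t] ((s : V), ρ'))
    rcases lt_or_gt_of_ne hab with h | h
    · exact key a b h he
    · exact key b a h he.symm
end
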